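/- Let η, β : W → A, f : Σ_A W → X with ι_X = f∘θ and secat(ι_X) ≤ n, and let σ : X → G_n(ι_X) be any homotopy section of g_n. Let H_n be the homotopy pullback of g_n and f with projections f_n : H_n → G_n(ι_X) and η_n^W : H_n → Σ_A W, let θ_n^W = (ω_n, id) : Σ_A W → H_n be the whisker map, let σ̄ : Σ_A W → H_n be the whisker map with f_n∘σ̄ ≃ σ∘f and η_n^W∘σ̄ ≃ id (arising since, by the prism lemma, the homotopy pullback of σ along f_n is Σ_A W), and let Q be the homotopy pullback of θ_n^W and σ̄ with projections π, π′ : Q → Σ_A W (which satisfy π ≃ π′). Then the following are equivalent: (i) σ∘f ≃ ω_n; (ii) π admits a homotopy section; (iii) π is a homotopy epimorphism; (iv) θ_n^W ≃ σ̄. -/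

import Mathlib

/-!
Framework: pointed/topological homotopy theory à la Doeraene–El Haouari.
Concrete models of homotopy pullbacks (path space construction) and homotopy
pushouts (double mapping cylinders), the Ganea construction of a map,
sectional category `secat`, relative category `relcat` (and of order `k`,
`relcatk`), relative suspensions, the whisker maps `ω_n`, the Hopf category
`hcat` and the strong Hopf category `Hcat`.
-/

noncomputable section

open ContinuousMap unitInterval

universe u

section Basic

variable {W A B X Y P Z' : Type u} [TopologicalSpace W] [TopologicalSpace A] [TopologicalSpace B]
  [TopologicalSpace X] [TopologicalSpace Y] [TopologicalSpace P] [TopologicalSpace Z']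

/-- `f : X → Y` is a homotopy equivalence. -/
def IsHEquiv {X Y : Type u} [TopologicalSpace X] [TopologicalSpace Y] (f : C(X, Y)) : Prop :=
  ∃ g : C(Y, X), (f.comp g).Homotopic (ContinuousMap.id Y) ∧ (g.comp f).Homotopic (ContinuousMap.id X)

/-- `p` is a homotopy epimorphism: `u ∘ p ≃ v ∘ p` implies `u ≃ v`. -/
def IsHEpi {X Y : Type u} [TopologicalSpace X] [TopologicalSpace Y] (p : C(X, Y)) : Prop :=
  ∀ (Z : TopCat.{u}) (u v : C(Y, Z)), (u.comp p).Homotopic (v.comp p) → u.Homotopic v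

/-- The concrete homotopy pullback of `f : A → X` and `g : B → X`:
points of `A` and `B` together with a path joining their images. -/
@[reducible] def HPb (f : C(A, X)) (g : C(B, X)) : Type u :=
  {p : A × C(unitInterval, X) × B // p.2.1 0 = f p.1 ∧ p.2.1 1 = g p.2.2}

/-- First projection of the homotopy pullback. -/
def HPb.pr1 (f : C(A, X)) (g : C(B, X)) : C(HPb f g, A) :=
  ⟨fun p => p.1.1, (continuous_fst.comp continuous_subtype_val)⟩

/-- Second projection of the homotopy pullback. -/
def HPb.pr2 (f : C(A, X)) (g : C(B, X)) : C(HPb f g, B) :=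
  ⟨fun p => p.1.2.2, (continuous_snd.comp (continuous_snd.comp continuous_subtype_val))⟩

/-- The canonical homotopy `f ∘ pr1 ≃ g ∘ pr2` on the homotopy pullback,
given by evaluating the path component. -/
def HPb.evalHomotopy (f : C(A, X)) (g : C(B, X)) :
    ContinuousMap.Homotopy (f.comp (HPb.pr1 f g)) (g.comp (HPb.pr2 f g)) where
  toFun := fun q => q.2.1.2.1 q.1
  continuous_toFun := by
    have h1 : Continuous fun q : unitInterval × HPb f g => ((q.2.1.2.1 : C(unitInterval, X)), q.1) :=
      ((continuous_fst.comp (continuous_snd.comp (continuous_subtype_val.comp continuous_snd)))).prodMk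
        continuous_fst
    exact continuous_eval.comp h1
  map_zero_left := fun p => p.2.1
  map_one_left := fun p => p.2.2

/-- The whisker map into the homotopy pullback induced by a homotopy commutative square. -/
def HPb.whisker (f : C(A, X)) (g : C(B, X)) (p : C(Z', A)) (q : C(Z', B))
    (H : ContinuousMap.Homotopy (f.comp p) (g.comp q)) : C(Z', HPb f g) where
  toFun := fun z => ⟨(p z, ((H.toContinuousMap.comp ContinuousMap.prodSwap).curry z, q z)),
    ⟨H.apply_zero z, H.apply_one z⟩⟩
  continuous_toFun := by
    apply Continuous.subtype_mk
    exact (map_continuous p).prodMk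
      (((map_continuous (H.toContinuousMap.comp ContinuousMap.prodSwap).curry)).prodMk
        (map_continuous q))

/-- A homotopy commutative square is a homotopy pullback if some whisker map
to the concrete homotopy pullback is a homotopy equivalence. -/
def IsHPullback (f : C(A, X)) (g : C(B, X)) (p : C(Z', A)) (q : C(Z', B)) : Prop :=
  ∃ H : ContinuousMap.Homotopy (f.comp p) (g.comp q), IsHEquiv (HPb.whisker f g p q H)

/-- The gluing relation for the double mapping cylinder of `f : W → A` and `g : W → B`. -/
inductive DCylRel (f : C(W, A)) (g : C(W, B)) :
    (A ⊕ (B ⊕ W × unitInterval)) → (A ⊕ (B ⊕ W × unitInterval)) → Prop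
  | left (w : W) : DCylRel f g (Sum.inl (f w)) (Sum.inr (Sum.inr (w, 0)))
  | right (w : W) : DCylRel f g (Sum.inr (Sum.inl (g w))) (Sum.inr (Sum.inr (w, 1)))

/-- The double mapping cylinder: the concrete homotopy pushout of `f : W → A`, `g : W → B`. -/
@[reducible] def DCyl (f : C(W, A)) (g : C(W, B)) : Type u := Quot (DCylRel f g)

/-- Left leg of the double mapping cylinder. -/
def DCyl.inl (f : C(W, A)) (g : C(W, B)) : C(A, DCyl f g) :=
  ⟨fun a => Quot.mk _ (Sum.inl a), continuous_quot_mk.comp continuous_inl⟩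

/-- Right leg of the double mapping cylinder. -/
def DCyl.inr (f : C(W, A)) (g : C(W, B)) : C(B, DCyl f g) :=
  ⟨fun b => Quot.mk _ (Sum.inr (Sum.inl b)), continuous_quot_mk.comp (continuous_inr.comp continuous_inl)⟩

/-- The map out of a double mapping cylinder glued from `u`, `v` and a homotopy `u∘f ≃ v∘g`. -/
def DCyl.glue {f : C(W, A)} {g : C(W, B)} (u : C(A, P)) (v : C(B, P))
    (H : ContinuousMap.Homotopy (u.comp f) (v.comp g)) : C(DCyl f g, P) where
  toFun := Quot.lift (Sum.elim u (Sum.elim v (fun q => H (q.2, q.1))))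
    (by rintro x y (⟨w⟩ | ⟨w⟩)
        · exact (H.apply_zero w).symm
        · exact (H.apply_one w).symm)
  continuous_toFun := by
    apply continuous_quot_lift
    exact (map_continuous u).sumElim ((map_continuous v).sumElim
      ((H.toContinuousMap.continuous).comp continuous_swap))

/-- A homotopy commutative square is a homotopy pushout if some glued map
from the concrete double mapping cylinder is a homotopy equivalence. -/
def IsHPushout (f : C(W, A)) (g : C(W, B)) (u : C(A, P)) (v : C(B, P)) : Prop :=
  ∃ H : ContinuousMap.Homotopy (u.comp f) (v.comp g), IsHEquiv (DCyl.glue u v H)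

/-- A map `g` is relatively dominated by `f` (both defined on `B`). -/
def RelDominated {B Y X : Type u} [TopologicalSpace B] [TopologicalSpace Y] [TopologicalSpace X]
    (g : C(B, Y)) (f : C(B, X)) : Prop :=
  ∃ (φ : C(X, Y)) (sec : C(Y, X)), (φ.comp sec).Homotopic (ContinuousMap.id Y) ∧
    (φ.comp f).Homotopic g ∧ (sec.comp g).Homotopic f

end Basic

section Ganea

variable {A X : Type u} [TopologicalSpace A] [TopologicalSpace X]

/-- One stage of the Ganea construction. -/
structure GaneaAux (A X : Type u) [TopologicalSpace A] [TopologicalSpace X] where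
  /-- the space `G_n` -/
  G : Type u
  /-- its topology -/
  [topG : TopologicalSpace G]
  /-- the Ganea map `g_n : G_n → X` -/
  g : C(G, X)
  /-- the canonical map `α_n : A → G_n` -/
  α : C(A, G)

attribute [instance] GaneaAux.topG

/-- The Ganea construction of `ι : A → X`: `G_0 = A`, `g_0 = ι`, and `G_{n+1}` is the
homotopy pushout (double mapping cylinder) of the two projections of the homotopy
pullback `F_n` of `g_n` and `ι`. -/
def ganeaAux (ι : C(A, X)) : ℕ → GaneaAux A X
  | 0 => { G := A, g := ι, α := ContinuousMap.id A }
  | (n+1) =>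
    { G := DCyl (HPb.pr1 (ganeaAux ι n).g ι) (HPb.pr2 (ganeaAux ι n).g ι)
      g := DCyl.glue (ganeaAux ι n).g ι (HPb.evalHomotopy (ganeaAux ι n).g ι)
      α := DCyl.inr (HPb.pr1 (ganeaAux ι n).g ι) (HPb.pr2 (ganeaAux ι n).g ι) }

/-- The `n`-th Ganea space `G_n(ι)`. -/
def GaneaG (ι : C(A, X)) (n : ℕ) : Type u := (ganeaAux ι n).G

instance (ι : C(A, X)) (n : ℕ) : TopologicalSpace (GaneaG ι n) := (ganeaAux ι n).topG

/-- The `n`-th Ganea map `g_n : G_n(ι) → X`. -/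
def ganeaMap (ι : C(A, X)) (n : ℕ) : C(GaneaG ι n, X) := (ganeaAux ι n).g

/-- The canonical map `α_n : A → G_n(ι)`. -/
def ganeaAlpha (ι : C(A, X)) (n : ℕ) : C(A, GaneaG ι n) := (ganeaAux ι n).α

/-- The `n`-th homotopy fibre `F_n(ι)`: the homotopy pullback of `g_n` and `ι`. -/
def ganeaF (ι : C(A, X)) (n : ℕ) : Type u := HPb (ganeaMap ι n) ι

instance (ι : C(A, X)) (n : ℕ) : TopologicalSpace (ganeaF ι n) :=
  inferInstanceAs (TopologicalSpace (HPb (ganeaMap ι n) ι))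

/-- `β_n : F_n(ι) → G_n(ι)`. -/
def ganeaBeta (ι : C(A, X)) (n : ℕ) : C(ganeaF ι n, GaneaG ι n) := HPb.pr1 (ganeaMap ι n) ι

/-- `η_n : F_n(ι) → A`. -/
def ganeaEta (ι : C(A, X)) (n : ℕ) : C(ganeaF ι n, A) := HPb.pr2 (ganeaMap ι n) ι

/-- `γ_n : G_n(ι) → G_{n+1}(ι)`. -/
def ganeaGamma (ι : C(A, X)) (n : ℕ) : C(GaneaG ι n, GaneaG ι (n+1)) :=
  DCyl.inl (HPb.pr1 (ganeaAux ι n).g ι) (HPb.pr2 (ganeaAux ι n).g ι)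

/-- `γ_{k,k+m} : G_k(ι) → G_{k+m}(ι)`, the composite of the `γ_i`. -/
def ganeaGammaFrom (ι : C(A, X)) (k : ℕ) : (m : ℕ) → C(GaneaG ι k, GaneaG ι (k + m))
  | 0 => ContinuousMap.id _
  | (m+1) => (ganeaGamma ι (k+m)).comp (ganeaGammaFrom ι k m)

/-- The sectional category of `ι : A → X`: the least `n` such that `g_n : G_n(ι) → X`
admits a homotopy section. -/
def secat (ι : C(A, X)) : ℕ∞ :=
  sInf {n : ℕ∞ | ∃ m : ℕ, n = (m : ℕ∞) ∧ ∃ sec : C(X, GaneaG ι m),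
    ((ganeaMap ι m).comp sec).Homotopic (ContinuousMap.id X)}

/-- The relative category of `ι : A → X`: the least `n` such that `g_n : G_n(ι) → X`
admits a homotopy section `σ` with `σ ∘ ι ≃ α_n`. -/
def relcat (ι : C(A, X)) : ℕ∞ :=
  sInf {n : ℕ∞ | ∃ m : ℕ, n = (m : ℕ∞) ∧ ∃ sec : C(X, GaneaG ι m),
    ((ganeaMap ι m).comp sec).Homotopic (ContinuousMap.id X) ∧
    (sec.comp ι).Homotopic (ganeaAlpha ι m)}

/-- The relative category of order `k` of `ι : A → X`: the least `n (= k + m)` such that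
`g_n` admits a homotopy section `σ` with `σ ∘ g_k ≃ γ_{k,n}`. -/
def relcatk (ι : C(A, X)) (k : ℕ) : ℕ∞ :=
  sInf {n : ℕ∞ | ∃ m : ℕ, n = ((k + m : ℕ) : ℕ∞) ∧ ∃ sec : C(X, GaneaG ι (k + m)),
    ((ganeaMap ι (k + m)).comp sec).Homotopic (ContinuousMap.id X) ∧
    (sec.comp (ganeaMap ι k)).Homotopic (ganeaGammaFrom ι k m)}

/-- The Lusternik–Schnirelmann category of the pointed space `(X, x₀)`,
i.e. the relative category of `∗ → X`. -/
def ptcat (X : Type u) [TopologicalSpace X] (x₀ : X) : ℕ∞ :=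
  relcat (ContinuousMap.const PUnit.{u+1} x₀)

end Ganea

section RelSuspension

variable {W A X : Type u} [TopologicalSpace W] [TopologicalSpace A] [TopologicalSpace X]

/-- A relative suspension of `η, β : W → A`: a homotopy pushout of `η` and `β`
both of whose legs are the same map `θ : A → S`.  The structure records the
structure homotopy `K : θ∘η ≃ θ∘β` together with the fact that the glued
comparison map from the double mapping cylinder is a homotopy equivalence. -/
structure RelSusp (η β : C(W, A)) where
  /-- the total space `Σ_A W` -/
  S : Type u
  /-- its topology -/
  [topS : TopologicalSpace S]
  /-- the common leg `θ : A → Σ_A W` -/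
  θ : C(A, S)
  /-- the structure homotopy `θ∘η ≃ θ∘β` -/
  K : ContinuousMap.Homotopy (θ.comp η) (θ.comp β)
  /-- a homotopy inverse to the comparison map `DCyl η β → S` -/
  inv : C(S, DCyl η β)
  glue_inv : ((DCyl.glue θ θ K).comp inv).Homotopic (ContinuousMap.id S)
  inv_glue : (inv.comp (DCyl.glue θ θ K)).Homotopic (ContinuousMap.id (DCyl η β))

attribute [instance] RelSusp.topS

variable {η β : C(W, A)}

/-- Auxiliary: the swap-and-reverse map `W × I → I × W`. -/
def cylSwap : C(W × unitInterval, unitInterval × W) :=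
  ⟨fun p => (unitInterval.symm p.2, p.1),
    (unitInterval.continuous_symm.comp continuous_snd).prodMk continuous_fst⟩

/-- Auxiliary: the family of paths `t ↦ f (K (σ t, w))` from `ι(β w)` to `ι(η w)`. -/
def omegaPath (R : RelSusp η β) (f : C(R.S, X)) : C(W, C(unitInterval, X)) :=
  ContinuousMap.curry ((f.comp R.K.toContinuousMap).comp cylSwap)

/-- Auxiliary: the canonical map `W → F_0(ι)` underlying the whisker map `ω`. -/
def omegaF (R : RelSusp η β) (ι : C(A, X)) (f : C(R.S, X)) (hf : ∀ a, f (R.θ a) = ι a) :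
    C(W, ganeaF ι 0) where
  toFun := fun w => ⟨(β w, (omegaPath R f w, η w)), by
    constructor
    · show (omegaPath R f w) 0 = ι (β w)
      show f (R.K (unitInterval.symm 0, w)) = ι (β w)
      rw [unitInterval.symm_zero, R.K.apply_one]
      exact hf (β w)
    · show (omegaPath R f w) 1 = ι (η w)
      show f (R.K (unitInterval.symm 1, w)) = ι (η w)
      rw [unitInterval.symm_one, R.K.apply_zero]
      exact hf (η w)⟩
  continuous_toFun := by
    apply Continuous.subtype_mk
    exact (map_continuous β).prodMk ((map_continuous (omegaPath R f)).prodMk (map_continuous η))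

/-- The canonical comparison `DCyl η β → G_1(ι)` (the concrete model of `ω_1`). -/
def omegaDCyl (R : RelSusp η β) (ι : C(A, X)) (f : C(R.S, X)) (hf : ∀ a, f (R.θ a) = ι a) :
    C(DCyl η β, GaneaG ι 1) where
  toFun := Quot.lift (Sum.elim
      (fun a => ganeaAlpha ι 1 a)
      (Sum.elim (fun a => ganeaGamma ι 0 (ganeaAlpha ι 0 a))
        (fun q => Quot.mk _ (Sum.inr (Sum.inr (omegaF R ι f hf q.1, unitInterval.symm q.2))))))
    (by
      rintro x y (⟨w⟩ | ⟨w⟩)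
      · show ganeaAlpha ι 1 (η w) =
          Quot.mk _ (Sum.inr (Sum.inr (omegaF R ι f hf w, unitInterval.symm 0)))
        rw [unitInterval.symm_zero]
        exact Quot.sound (DCylRel.right (omegaF R ι f hf w))
      · show ganeaGamma ι 0 (ganeaAlpha ι 0 (β w)) =
          Quot.mk _ (Sum.inr (Sum.inr (omegaF R ι f hf w, unitInterval.symm 1)))
        rw [unitInterval.symm_one]
        exact Quot.sound (DCylRel.left (omegaF R ι f hf w)))
  continuous_toFun := by
    apply continuous_quot_lift
    apply Continuous.sumElim
    · exact map_continuous (ganeaAlpha ι 1)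
    apply Continuous.sumElim
    · exact (map_continuous (ganeaGamma ι 0)).comp (map_continuous (ganeaAlpha ι 0))
    · exact (continuous_quot_mk.comp (continuous_inr.comp continuous_inr)).comp
        (((map_continuous (omegaF R ι f hf)).comp continuous_fst).prodMk
          (unitInterval.continuous_symm.comp continuous_snd))

/-- The whisker map `ω_1 : Σ_A W → G_1(ι)`. -/
def omega1 (R : RelSusp η β) (ι : C(A, X)) (f : C(R.S, X)) (hf : ∀ a, f (R.θ a) = ι a) :
    C(R.S, GaneaG ι 1) :=
  (omegaDCyl R ι f hf).comp R.inv

/-- The whisker map `ω_{1+m} = γ_{1,1+m} ∘ ω_1 : Σ_A W → G_{1+m}(ι)`. -/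
def omega (R : RelSusp η β) (ι : C(A, X)) (f : C(R.S, X)) (hf : ∀ a, f (R.θ a) = ι a) (m : ℕ) :
    C(R.S, GaneaG ι (1 + m)) :=
  (ganeaGammaFrom ι 1 m).comp (omega1 R ι f hf)

/-- The Hopf category of `f : Σ_A W → X`: the least `n ≥ 1` such that
`g_n : G_n(ι_X) → X` (for `ι_X = f ∘ θ`) admits a homotopy section `σ` with `σ ∘ f ≃ ω_n`. -/
def hcat (R : RelSusp η β) {X : Type u} [TopologicalSpace X] (f : C(R.S, X)) : ℕ∞ :=
  sInf {n : ℕ∞ | ∃ m : ℕ, n = ((1 + m : ℕ) : ℕ∞) ∧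
    ∃ sec : C(X, GaneaG (f.comp R.θ) (1 + m)),
      ((ganeaMap (f.comp R.θ) (1 + m)).comp sec).Homotopic (ContinuousMap.id X) ∧
      (sec.comp f).Homotopic (omega R (f.comp R.θ) f (fun _ => rfl) m)}

/-- A chain of homotopy commutative cubes realizing `Hcat ≤ n`, defined by downward
recursion: `HcatChain R n ιn ζn` says that there are spaces `X_0, …, X_n = X`, maps
`ι_i : A → X_i` with `ι_0` a homotopy equivalence and `ι_n = ιn`, maps
`ζ_i : Σ_A W → X_i` with `ζ_n = ζn`, and for each `i < n` a homotopy commutative cube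
whose top face is the relative suspension square and whose bottom face is a homotopy
pushout as in the definition of the strong Hopf category. -/
def HcatChain (R : RelSusp η β) : (n : ℕ) → {X : Type u} → [TopologicalSpace X] →
    C(A, X) → C(R.S, X) → Prop
  | 0 => fun ιn _ =>
      ∃ lam : C(_, A), (ιn.comp lam).Homotopic (ContinuousMap.id _) ∧
        (lam.comp ιn).Homotopic (ContinuousMap.id A)
  | (n+1) => fun ιn ζn =>
      ∃ (X' : TopCat.{u}) (ι' : C(A, X')) (ζ' : C(R.S, X'))
        (Z : TopCat.{u}) (a : C(Z, A)) (z : C(Z, X')) (w : C(W, Z)) (χ : C(X', _)),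
        IsHPushout a z ιn χ ∧
        (a.comp w).Homotopic η ∧
        (z.comp w).Homotopic (ι'.comp β) ∧
        (ζn.comp R.θ).Homotopic ιn ∧
        (ζn.comp R.θ).Homotopic (χ.comp ι') ∧
        HcatChain R n ι' ζ'

/-- `Hcat f ≤ n`. -/
def HcatLe (R : RelSusp η β) {X : Type u} [TopologicalSpace X] (f : C(R.S, X)) (n : ℕ) : Prop :=
  1 ≤ n ∧ ∃ ιn : C(A, X), HcatChain R n ιn f

/-- The strong Hopf category of `f : Σ_A W → X`. -/
def Hcat (R : RelSusp η β) {X : Type u} [TopologicalSpace X] (f : C(R.S, X)) : ℕ∞ :=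
  sInf {n : ℕ∞ | ∃ m : ℕ, n = (m : ℕ∞) ∧ HcatLe R f m}

end RelSuspension

section Spaces

variable {A Z : Type u} [TopologicalSpace A] [TopologicalSpace Z]

/-- The join `A ⋈ B`: the homotopy pushout (double mapping cylinder) of the two
projections `A ← A × B → B`. -/
@[reducible] def Join (A B : Type u) [TopologicalSpace A] [TopologicalSpace B] : Type u :=
  DCyl (⟨Prod.fst, continuous_fst⟩ : C(A × B, A)) (⟨Prod.snd, continuous_snd⟩ : C(A × B, B))

/-- The iterated join of `n+1` copies of `A` (as a bundled space). -/
def IterJoinT (A : Type u) [TopologicalSpace A] : ℕ → TopCat.{u}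
  | 0 => TopCat.of A
  | (n+1) => TopCat.of (Join ↥(IterJoinT A n) A)

/-- The iterated join of `n+1` copies of `A`. -/
@[reducible] def IterJoin (A : Type u) [TopologicalSpace A] (n : ℕ) : Type u := ↥(IterJoinT A n)

/-- Gluing relation for the wedge `A ∨ A`. -/
inductive WedgeRel (A : Type u) (a₀ : A) : (A ⊕ A) → (A ⊕ A) → Prop
  | basept : WedgeRel A a₀ (Sum.inl a₀) (Sum.inr a₀)

/-- The wedge `A ∨ A` of two copies of the pointed space `(A, a₀)`. -/
@[reducible] def Wedge (A : Type u) [TopologicalSpace A] (a₀ : A) : Type u := Quot (WedgeRel A a₀)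

/-- `pr_1 : A ∨ A → A`, collapsing the second wedge summand. -/
def Wedge.pr1 (a₀ : A) : C(Wedge A a₀, A) :=
  ⟨Quot.lift (Sum.elim id (fun _ => a₀)) (by rintro x y ⟨⟩; rfl),
    continuous_quot_lift _ (continuous_id.sumElim continuous_const)⟩

/-- `pr_2 : A ∨ A → A`, collapsing the first wedge summand. -/
def Wedge.pr2 (a₀ : A) : C(Wedge A a₀, A) :=
  ⟨Quot.lift (Sum.elim (fun _ => a₀) id) (by rintro x y ⟨⟩; rfl),
    continuous_quot_lift _ (continuous_const.sumElim continuous_id)⟩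

/-- The inclusion `t₁ : A ∨ A → A × A` of the wedge in the product. -/
def Wedge.incl (a₀ : A) : C(Wedge A a₀, A × A) :=
  ⟨Quot.lift (Sum.elim (fun x => (x, a₀)) (fun x => (a₀, x))) (by rintro x y ⟨⟩; rfl),
    continuous_quot_lift _ ((continuous_id.prodMk continuous_const).sumElim
      (continuous_const.prodMk continuous_id))⟩

/-- The (unreduced) suspension `ΣZ`, as the double mapping cylinder of `∗ ← Z → ∗`. -/
@[reducible] def Susp (Z : Type u) [TopologicalSpace Z] : Type u :=
  DCyl (ContinuousMap.const Z (PUnit.unit : PUnit.{u+1})) (ContinuousMap.const Z PUnit.unit)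

/-- The north pole of the suspension, used as its basepoint. -/
def Susp.north (Z : Type u) [TopologicalSpace Z] : Susp Z := Quot.mk _ (Sum.inl PUnit.unit)

/-- The map `ι_∗ : A → ∗`. -/
def iotaStar (A : Type u) [TopologicalSpace A] : C(A, PUnit.{u+1}) :=
  ContinuousMap.const A PUnit.unit

/-- The `n`-sphere `S^n ⊆ ℝ^{n+1}`. -/
@[reducible] def Sph (n : ℕ) : Type :=
  ↥(Metric.sphere (0 : EuclideanSpace ℝ (Fin (n+1))) 1)

end Spaces

section CWCompat

open CategoryTheory

/-- The `n`-dimensional sphere (old Mathlib `RelativeCWComplex.sphere`). -/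
def RelativeCWComplex.sphere (n : ℤ) : TopCat.{u} :=
  TopCat.of (ULift.{u} (Metric.sphere (0 : EuclideanSpace ℝ (Fin (n + 1).toNat)) 1))

/-- The `n`-dimensional closed disk (old Mathlib `RelativeCWComplex.disk`). -/
def RelativeCWComplex.disk (n : ℤ) : TopCat.{u} :=
  TopCat.of (ULift.{u} (Metric.closedBall (0 : EuclideanSpace ℝ (Fin n.toNat)) 1))

/-- The inclusion of the sphere into the disk (old Mathlib `RelativeCWComplex.sphereInclusion`). -/
def RelativeCWComplex.sphereInclusion (n : ℤ) :
    RelativeCWComplex.sphere.{u} n ⟶ RelativeCWComplex.disk.{u} (n + 1) :=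
  TopCat.ofHom ⟨fun p => ⟨⟨p.down.1, le_of_eq p.down.2⟩⟩, by fun_prop⟩

/-- Attaching generalized cells (old Mathlib `RelativeCWComplex.AttachGeneralizedCells`). -/
structure RelativeCWComplex.AttachGeneralizedCells {S D : TopCat.{u}} (f : S ⟶ D)
    (X X' : TopCat.{u}) where
  cells : Type u
  attachMaps : cells → (S ⟶ X)
  iso_pushout : X' ≅ Limits.pushout (Limits.Sigma.desc attachMaps) (Limits.Sigma.map fun _ ↦ f)

/-- Attaching cells (old Mathlib `RelativeCWComplex.AttachCells`). -/
abbrev RelativeCWComplex.AttachCells (n : ℤ) :=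
  RelativeCWComplex.AttachGeneralizedCells (RelativeCWComplex.sphereInclusion.{u} n)

/-- Relative CW-complex (old Mathlib, December 2024). -/
structure RelativeCWComplex where
  sk : ℕ → TopCat.{u}
  attachCells (n : ℕ) : RelativeCWComplex.AttachCells ((n : ℤ) - 1) (sk n) (sk (n + 1))

/-- CW-complex (old Mathlib, December 2024). -/
structure CWComplex extends RelativeCWComplex.{u} where
  isEmpty_sk_zero : IsEmpty (sk 0)

/-- Inclusion into the result of attaching generalized cells. -/
def RelativeCWComplex.AttachGeneralizedCells.inclusion {S D : TopCat.{u}} {f : S ⟶ D}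
    {X X' : TopCat.{u}} (att : RelativeCWComplex.AttachGeneralizedCells f X X') : X ⟶ X' :=
  Limits.pushout.inl _ _ ≫ att.iso_pushout.inv

/-- Skeleton inclusion. -/
def RelativeCWComplex.skInclusion (X : RelativeCWComplex.{u}) (n : ℕ) : X.sk n ⟶ X.sk (n + 1) :=
  (X.attachCells n).inclusion

/-- The topological space of a relative CW-complex. -/
def RelativeCWComplex.toTopCat (X : RelativeCWComplex.{u}) : TopCat.{u} :=
  Limits.colimit (Functor.ofSequence (RelativeCWComplex.skInclusion X))

end CWCompat

section Connectivity

/-- The boundary inclusion `S^{k-1} → D^k`. -/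
def diskIncl (k : ℕ) : C(↥(Metric.sphere (0 : EuclideanSpace ℝ (Fin k)) 1),
    ↥(Metric.closedBall (0 : EuclideanSpace ℝ (Fin k)) 1)) :=
  ⟨fun x => ⟨x.1, Metric.sphere_subset_closedBall x.2⟩,
    Continuous.subtype_mk continuous_subtype_val _⟩

/-- `ι : A → X` is a `c`-connected map: for all `k ≤ c`, every strictly commutative
square on the pair `(D^k, S^{k-1})` admits a lift which is exact on the boundary and
commutes up to homotopy rel the boundary sphere. -/
def IsConnMap (c : ℕ) {A X : Type u} [TopologicalSpace A] [TopologicalSpace X]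
    (ι : C(A, X)) : Prop :=
  ∀ k : ℕ, k ≤ c →
    ∀ (v : C(↥(Metric.closedBall (0 : EuclideanSpace ℝ (Fin k)) 1), X))
      (u : C(↥(Metric.sphere (0 : EuclideanSpace ℝ (Fin k)) 1), A)),
      v.comp (diskIncl k) = ι.comp u →
      ∃ w : C(↥(Metric.closedBall (0 : EuclideanSpace ℝ (Fin k)) 1), A),
        w.comp (diskIncl k) = u ∧
        (ι.comp w).HomotopicRel v (Set.range (diskIncl k))

/-- The space `S` carries a CW-structure all of whose cells have dimension `< d`. -/
def IsCWOfDimLt (S : Type u) [TopologicalSpace S] (d : ℕ) : Prop :=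
  ∃ (K : CWComplex.{u}) (_ : S ≃ₜ ↥(RelativeCWComplex.toTopCat K.toRelativeCWComplex)),
    ∀ j : ℕ, d ≤ j → IsEmpty ((K.attachCells j).cells)

/-- The space `S` carries some CW-structure. -/
def IsCW (S : Type u) [TopologicalSpace S] : Prop :=
  ∃ (K : CWComplex.{u}), Nonempty (S ≃ₜ ↥(RelativeCWComplex.toTopCat K.toRelativeCWComplex))

end Connectivity

namespace DEH
open Set

/-! ### clamping to the unit interval -/

def pj (r : ℝ) : unitInterval := Set.projIcc 0 1 zero_le_one r

lemma continuous_pj : Continuous pj :=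
  (continuous_projIcc : Continuous (Set.projIcc (0:ℝ) 1 zero_le_one))

lemma pj_coe (u : unitInterval) : pj (u : ℝ) = u := by
  simp [pj, Set.projIcc_of_mem, u.2]

@[simp] lemma pj_zero : pj 0 = 0 := by simpa using pj_coe 0

@[simp] lemma pj_one : pj 1 = 1 := by simpa using pj_coe 1

lemma pj_of_nonpos {r : ℝ} (h : r ≤ 0) : pj r = 0 := by
  rw [pj, Set.projIcc_of_le_left _ h]; rfl

lemma pj_of_one_le {r : ℝ} (h : 1 ≤ r) : pj r = 1 := by
  rw [pj, Set.projIcc_of_right_le _ h]; rfl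

lemma coe_pj {r : ℝ} (h0 : 0 ≤ r) (h1 : r ≤ 1) : ((pj r : ℝ)) = r := by
  rw [pj, Set.projIcc_of_mem _ ⟨h0, h1⟩]

lemma symm_pj (r : ℝ) : unitInterval.symm (pj r) = pj (1 - r) := by
  rcases le_or_gt r 0 with h | h
  · rw [pj_of_nonpos h, pj_of_one_le (by linarith), symm_zero]
  rcases le_or_gt 1 r with h1 | h1
  · rw [pj_of_one_le h1, pj_of_nonpos (by linarith), symm_one]
  · ext
    rw [coe_pj (by linarith) (by linarith)]
    show 1 - (pj r : ℝ) = 1 - r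
    rw [coe_pj (le_of_lt h) (le_of_lt h1)]

variable {S G X : Type u} [TopologicalSpace S] [TopologicalSpace G] [TopologicalSpace X]

/-! ### points of the pullback from components, and moves -/

/-- a map `S → HPb g f` from components -/
def mkH (g : C(G,X)) (f : C(S,X)) (a : C(S,G)) (P : C(S × unitInterval, X)) (b : C(S,S))
    (h0 : ∀ s, P (s,0) = g (a s)) (h1 : ∀ s, P (s,1) = f (b s)) : C(S, HPb g f) :=
  ⟨fun s => ⟨(a s, P.curry s, b s), h0 s, h1 s⟩, by
    apply Continuous.subtype_mk
    exact (map_continuous a).prodMk ((map_continuous P.curry).prodMk (map_continuous b))⟩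

/-- concatenation of families of paths -/
def cpf (γ₁ γ₂ : C(S × unitInterval, X)) (hj : ∀ s, γ₁ (s, 1) = γ₂ (s, 0)) :
    C(S × unitInterval, X) :=
  ⟨fun p => if 2*(p.2:ℝ) ≤ 1 then γ₁ (p.1, pj (2*p.2)) else γ₂ (p.1, pj (2*p.2 - 1)), by
    apply Continuous.if_le
    · exact (map_continuous γ₁).comp (continuous_fst.prodMk
        (continuous_pj.comp (continuous_const.mul (continuous_subtype_val.comp continuous_snd))))
    · exact (map_continuous γ₂).comp (continuous_fst.prodMk
        (continuous_pj.comp ((continuous_const.mul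
          (continuous_subtype_val.comp continuous_snd)).sub continuous_const)))
    · exact continuous_const.mul (continuous_subtype_val.comp continuous_snd)
    · exact continuous_const
    · intro p hp
      have h1 : pj (2*(p.2:ℝ)) = 1 := by rw [hp]; exact pj_of_one_le le_rfl
      have h2 : pj (2*(p.2:ℝ) - 1) = 0 := by rw [hp]; simpa using pj_of_nonpos le_rfl
      rw [h1, h2, hj]⟩

lemma cpf_left {γ₁ γ₂ : C(S × unitInterval, X)} {hj} {s : S} {u : unitInterval}
    (h : 2*(u:ℝ) ≤ 1) : cpf γ₁ γ₂ hj (s,u) = γ₁ (s, pj (2*u)) := if_pos h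

lemma cpf_right {γ₁ γ₂ : C(S × unitInterval, X)} {hj} {s : S} {u : unitInterval}
    (h : ¬ (2*(u:ℝ) ≤ 1)) : cpf γ₁ γ₂ hj (s,u) = γ₂ (s, pj (2*u - 1)) := if_neg h

@[simp] lemma cpf_zero {γ₁ γ₂ : C(S × unitInterval, X)} {hj} {s : S} :
    cpf γ₁ γ₂ hj (s,0) = γ₁ (s, 0) := by
  rw [cpf_left (by norm_num)]
  norm_num

@[simp] lemma cpf_one {γ₁ γ₂ : C(S × unitInterval, X)} {hj} {s : S} :
    cpf γ₁ γ₂ hj (s,1) = γ₂ (s, 1) := by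
  rw [cpf_right (by norm_num)]
  norm_num

lemma cpf_pj_left {γ₁ γ₂ : C(S × unitInterval, X)} {hj} (s : S) {x : ℝ}
    (h0 : 0 ≤ x) (hx1 : x ≤ 1) (h : 2*x ≤ 1) :
    cpf γ₁ γ₂ hj (s, pj x) = γ₁ (s, pj (2*x)) := by
  rw [cpf_left (by rw [coe_pj h0 hx1]; exact h), coe_pj h0 hx1]

lemma cpf_pj_right {γ₁ γ₂ : C(S × unitInterval, X)} {hj} (s : S) {x : ℝ}
    (h0 : 0 ≤ x) (hx1 : x ≤ 1) (h : ¬ (2*x ≤ 1)) :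
    cpf γ₁ γ₂ hj (s, pj x) = γ₂ (s, pj (2*x - 1)) := by
  rw [cpf_right (by rw [coe_pj h0 hx1]; exact h), coe_pj h0 hx1]

/-- the master constructor for homotopies of maps `S → HPb g f` -/
def bigmove (g : C(G,X)) (f : C(S,X)) (Ac : C(unitInterval × S, G)) (Bc : C(unitInterval × S, S))
    (P : C((unitInterval × S) × unitInterval, X))
    (h0 : ∀ p, P (p, 0) = g (Ac p)) (h1 : ∀ p, P (p, 1) = f (Bc p))
    (a₀ a₁ : C(S,G)) (b₀ b₁ : C(S,S)) (P₀ P₁ : C(S × unitInterval, X))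
    (ha₀ : ∀ s, Ac (0,s) = a₀ s) (ha₁ : ∀ s, Ac (1,s) = a₁ s)
    (hb₀ : ∀ s, Bc (0,s) = b₀ s) (hb₁ : ∀ s, Bc (1,s) = b₁ s)
    (hP₀ : ∀ s u, P ((0,s), u) = P₀ (s,u)) (hP₁ : ∀ s u, P ((1,s), u) = P₁ (s,u))
    {k0₀ : ∀ s, P₀ (s,0) = g (a₀ s)} {k1₀ : ∀ s, P₀ (s,1) = f (b₀ s)}
    {k0₁ : ∀ s, P₁ (s,0) = g (a₁ s)} {k1₁ : ∀ s, P₁ (s,1) = f (b₁ s)} :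
    ContinuousMap.Homotopy (mkH g f a₀ P₀ b₀ k0₀ k1₀) (mkH g f a₁ P₁ b₁ k0₁ k1₁) where
  toFun := fun p => ⟨(Ac p, (P.curry p : C(unitInterval, X)), Bc p), h0 p, h1 p⟩
  continuous_toFun := by
    apply Continuous.subtype_mk
    exact (map_continuous Ac).prodMk ((map_continuous P.curry).prodMk (map_continuous Bc))
  map_zero_left := by
    intro s
    apply Subtype.ext
    refine Prod.ext (ha₀ s) (Prod.ext ?_ (hb₀ s))
    exact ContinuousMap.ext fun u => hP₀ s u
  map_one_left := by
    intro s
    apply Subtype.ext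
    refine Prod.ext (ha₁ s) (Prod.ext ?_ (hb₁ s))
    exact ContinuousMap.ext fun u => hP₁ s u

/-! ### the slide (E) move -/

/-- the prefix `g ∘ c` as a family of paths -/
def gcPF (g : C(G,X)) (c : C(unitInterval × S, G)) : C(S × unitInterval, X) :=
  ⟨fun p => g (c (p.2, p.1)),
    (map_continuous g).comp ((map_continuous c).comp (continuous_snd.prodMk continuous_fst))⟩

lemma coeI_le_one (t : unitInterval) : (t:ℝ) ≤ 1 := t.2.2
lemma coeI_nonneg (t : unitInterval) : (0:ℝ) ≤ (t:ℝ) := t.2.1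

def emoveP (g : C(G,X)) (c : C(unitInterval × S, G)) (δ : C(S × unitInterval, X))
    (hδ0 : ∀ s, δ (s,0) = g (c (1,s))) : C((unitInterval × S) × unitInterval, X) :=
  ⟨fun q => if 2*(q.2:ℝ) ≤ 1 - (q.1.1:ℝ) then g (c (pj ((q.1.1:ℝ) + 2*q.2), q.1.2))
            else δ (q.1.2, pj ((2*(q.2:ℝ) - 1 + q.1.1)/(1 + q.1.1))), by
    have ct : Continuous fun q : (unitInterval × S) × unitInterval => ((q.1.1 : ℝ)) :=
      continuous_subtype_val.comp (continuous_fst.comp continuous_fst)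
    have cu : Continuous fun q : (unitInterval × S) × unitInterval => ((q.2 : ℝ)) :=
      continuous_subtype_val.comp continuous_snd
    have cs : Continuous fun q : (unitInterval × S) × unitInterval => q.1.2 :=
      continuous_snd.comp continuous_fst
    apply Continuous.if_le
    · exact (map_continuous g).comp ((map_continuous c).comp
        ((continuous_pj.comp (ct.add (continuous_const.mul cu))).prodMk cs))
    · refine (map_continuous δ).comp (cs.prodMk (continuous_pj.comp ?_))
      refine Continuous.div (((continuous_const.mul cu).sub continuous_const).add ct)
        (continuous_const.add ct) ?_
      intro q
      have := coeI_nonneg q.1.1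
      intro hc; linarith
    · exact continuous_const.mul cu
    · exact continuous_const.sub ct
    · intro q hq
      have h1 : pj ((q.1.1:ℝ) + 2*q.2) = 1 := by rw [hq]; apply pj_of_one_le; linarith
      have h2 : pj ((2*(q.2:ℝ) - 1 + q.1.1)/(1 + q.1.1)) = 0 := by
        apply pj_of_nonpos
        apply div_nonpos_of_nonpos_of_nonneg
        · linarith
        · have := coeI_nonneg q.1.1; linarith
      rw [h1, h2, hδ0]⟩

lemma emoveP_zero (g : C(G,X)) (c : C(unitInterval × S, G)) (δ : C(S × unitInterval, X))
    (hδ0 : ∀ s, δ (s,0) = g (c (1,s))) (hj : ∀ s, gcPF g c (s,1) = δ (s,0)) (s : S)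
    (u : unitInterval) : emoveP g c δ hδ0 ((0,s),u) = cpf (gcPF g c) δ hj (s,u) := by
  simp only [emoveP, cpf, gcPF, ContinuousMap.coe_mk, Icc.coe_zero, sub_zero, zero_add,
    add_zero, div_one]

lemma emoveP_one (g : C(G,X)) (c : C(unitInterval × S, G)) (δ : C(S × unitInterval, X))
    (hδ0 : ∀ s, δ (s,0) = g (c (1,s))) (s : S) (u : unitInterval) :
    emoveP g c δ hδ0 ((1,s),u) = δ (s,u) := by
  simp only [emoveP, ContinuousMap.coe_mk, Icc.coe_one, sub_self]
  by_cases h : 2*(u:ℝ) ≤ 0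
  · rw [if_pos h]
    have hu : u = 0 := by
      ext; simp only [Icc.coe_zero]; linarith [coeI_nonneg u]
    have : pj ((1:ℝ) + 2*u) = 1 := by apply pj_of_one_le; have := coeI_nonneg u; linarith
    rw [this, hu, hδ0]
  · rw [if_neg h]
    congr 1
    have : (2*(u:ℝ) - 1 + 1)/(1+1) = (u:ℝ) := by ring
    rw [this, pj_coe]

lemma emoveP_e0 (g : C(G,X)) (c : C(unitInterval × S, G)) (δ : C(S × unitInterval, X))
    (hδ0 : ∀ s, δ (s,0) = g (c (1,s))) (p : unitInterval × S) :
    emoveP g c δ hδ0 (p, 0) = g (c p) := by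
  simp only [emoveP, ContinuousMap.coe_mk, Icc.coe_zero, mul_zero]
  rw [if_pos (by have := coeI_le_one p.1; linarith)]
  rw [add_zero, pj_coe]

lemma emoveP_e1 (g : C(G,X)) (c : C(unitInterval × S, G)) (δ : C(S × unitInterval, X))
    (hδ0 : ∀ s, δ (s,0) = g (c (1,s))) (p : unitInterval × S) :
    emoveP g c δ hδ0 (p, 1) = δ (p.2, 1) := by
  simp only [emoveP, ContinuousMap.coe_mk, Icc.coe_one, mul_one]
  rw [if_neg (by have := coeI_nonneg p.1; intro hc; linarith)]
  have h : ((2:ℝ) - 1 + p.1)/(1 + p.1) = 1 := by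
    have h1 : (1:ℝ) + p.1 ≠ 0 := by have := coeI_nonneg p.1; intro hc; linarith
    field_simp; ring
  rw [h, pj_one]

/-! ### the tail (T) move -/

def fdPF (f : C(S,X)) (d : C(unitInterval × S, S)) : C(S × unitInterval, X) :=
  ⟨fun p => f (d (p.2, p.1)),
    (map_continuous f).comp ((map_continuous d).comp (continuous_snd.prodMk continuous_fst))⟩

def tmoveP (f : C(S,X)) (δ : C(S × unitInterval, X)) (d : C(unitInterval × S, S))
    (hδ1 : ∀ s, δ (s,1) = f (d (0,s))) : C((unitInterval × S) × unitInterval, X) :=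
  ⟨fun q => if 2*(q.2:ℝ) ≤ 2 - (q.1.1:ℝ) then δ (q.1.2, pj (2*(q.2:ℝ)/(2 - q.1.1)))
            else f (d (pj (2*(q.2:ℝ) - 2 + q.1.1), q.1.2)), by
    have ct : Continuous fun q : (unitInterval × S) × unitInterval => ((q.1.1 : ℝ)) :=
      continuous_subtype_val.comp (continuous_fst.comp continuous_fst)
    have cu : Continuous fun q : (unitInterval × S) × unitInterval => ((q.2 : ℝ)) :=
      continuous_subtype_val.comp continuous_snd
    have cs : Continuous fun q : (unitInterval × S) × unitInterval => q.1.2 :=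
      continuous_snd.comp continuous_fst
    apply Continuous.if_le
    · refine (map_continuous δ).comp (cs.prodMk (continuous_pj.comp ?_))
      refine Continuous.div (continuous_const.mul cu) (continuous_const.sub ct) ?_
      intro q
      have := coeI_le_one q.1.1
      intro hc; linarith
    · exact (map_continuous f).comp ((map_continuous d).comp
        ((continuous_pj.comp (((continuous_const.mul cu).sub continuous_const).add ct)).prodMk cs))
    · exact continuous_const.mul cu
    · exact continuous_const.sub ct
    · intro q hq
      have hne : (2:ℝ) - q.1.1 ≠ 0 := by have := coeI_le_one q.1.1; intro hc; linarith
      have h1 : pj (2*(q.2:ℝ)/(2 - q.1.1)) = 1 := by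
        rw [hq, div_self hne]; exact pj_one
      have h2 : pj (2*(q.2:ℝ) - 2 + q.1.1) = 0 := by
        apply pj_of_nonpos; linarith
      rw [h1, h2, hδ1]⟩

lemma tmoveP_zero (f : C(S,X)) (δ : C(S × unitInterval, X)) (d : C(unitInterval × S, S))
    (hδ1 : ∀ s, δ (s,1) = f (d (0,s))) (s : S) (u : unitInterval) :
    tmoveP f δ d hδ1 ((0,s),u) = δ (s,u) := by
  simp only [tmoveP, ContinuousMap.coe_mk, Icc.coe_zero, sub_zero]
  rw [if_pos (by have := coeI_le_one u; linarith)]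
  have : 2*(u:ℝ)/2 = (u:ℝ) := by ring
  rw [this, pj_coe]

lemma tmoveP_one (f : C(S,X)) (δ : C(S × unitInterval, X)) (d : C(unitInterval × S, S))
    (hδ1 : ∀ s, δ (s,1) = f (d (0,s))) (hj : ∀ s, δ (s,1) = fdPF f d (s,0)) (s : S)
    (u : unitInterval) : tmoveP f δ d hδ1 ((1,s),u) = cpf δ (fdPF f d) hj (s,u) := by
  simp only [tmoveP, cpf, fdPF, ContinuousMap.coe_mk, Icc.coe_one]
  have h21 : (2:ℝ) - 1 = 1 := by norm_num
  rw [h21]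
  by_cases h : 2*(u:ℝ) ≤ 1
  · rw [if_pos h, if_pos h, div_one]
  · rw [if_neg h, if_neg h]
    congr 2
    ring

lemma tmoveP_e0 (f : C(S,X)) (δ : C(S × unitInterval, X)) (d : C(unitInterval × S, S))
    (hδ1 : ∀ s, δ (s,1) = f (d (0,s))) (p : unitInterval × S) :
    tmoveP f δ d hδ1 (p, 0) = δ (p.2, 0) := by
  simp only [tmoveP, ContinuousMap.coe_mk, Icc.coe_zero, mul_zero]
  rw [if_pos (by have := coeI_le_one p.1; linarith)]
  rw [zero_div, pj_zero]

lemma tmoveP_e1 (f : C(S,X)) (δ : C(S × unitInterval, X)) (d : C(unitInterval × S, S))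
    (hδ1 : ∀ s, δ (s,1) = f (d (0,s))) (p : unitInterval × S) :
    tmoveP f δ d hδ1 (p, 1) = f (d p) := by
  simp only [tmoveP, ContinuousMap.coe_mk, Icc.coe_one, mul_one]
  obtain ⟨t, s⟩ := p
  by_cases h : (2:ℝ) ≤ 2 - (t:ℝ)
  · rw [if_pos h]
    have hp : t = 0 := by ext; simp only [Icc.coe_zero]; have := coeI_nonneg t; linarith
    subst hp
    have h2 : (2:ℝ)/(2 - ((0:unitInterval):ℝ)) = 1 := by norm_num
    rw [h2, pj_one, hδ1]
  · rw [if_neg h]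
    have h2 : (2:ℝ) - 2 + t = (t:ℝ) := by ring
    rw [h2, pj_coe]

/-! ### the core context and path families -/

variable (S G X) in
structure Ctx [TopologicalSpace S] [TopologicalSpace G] [TopologicalSpace X] where
  g : C(G, X)
  f : C(S, X)
  sec : C(X, G)
  om : C(S, G)
  a' : C(S, G)
  b' : C(S, S)
  hs : ContinuousMap.Homotopy (g.comp sec) (ContinuousMap.id X)
  M : ContinuousMap.Homotopy (sec.comp f) om
  Hom : ContinuousMap.Homotopy (g.comp om) f
  K : ContinuousMap.Homotopy a' (sec.comp f)
  B : ContinuousMap.Homotopy b' (ContinuousMap.id S)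
  pb : C(S × unitInterval, X)
  hp0 : ∀ s, pb (s, 0) = g (a' s)
  hp1 : ∀ s, pb (s, 1) = f (b' s)

namespace Ctx

variable (c : Ctx S G X)

/-- `sec ∘ f` -/
def sf : C(S, G) := c.sec.comp c.f
/-- `sec ∘ g ∘ sec ∘ f` -/
def sgf : C(S, G) := c.sec.comp (c.g.comp (c.sec.comp c.f))

def cM : C(unitInterval × S, G) := c.M.toContinuousMap
def gM : C(S × unitInterval, X) := gcPF c.g c.cM
def Wb : C(S × unitInterval, X) := c.Hom.toContinuousMap.comp ContinuousMap.prodSwap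

@[simp] lemma gM_zero (s : S) : c.gM (s, 0) = c.g (c.sec (c.f s)) := by
  show c.g (c.M (0, s)) = _
  rw [c.M.apply_zero]; rfl

@[simp] lemma gM_one (s : S) : c.gM (s, 1) = c.g (c.om s) := by
  show c.g (c.M (1, s)) = _
  rw [c.M.apply_one]

@[simp] lemma Wb_zero (s : S) : c.Wb (s, 0) = c.g (c.om s) := by
  show c.Hom (0, s) = _
  rw [c.Hom.apply_zero]; rfl

@[simp] lemma Wb_one (s : S) : c.Wb (s, 1) = c.f s := by
  show c.Hom (1, s) = _
  rw [c.Hom.apply_one]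

def dB : C(unitInterval × S, S) :=
  ⟨fun p => c.B (unitInterval.symm p.1, p.2),
    c.B.continuous.comp ((unitInterval.continuous_symm.comp continuous_fst).prodMk
      continuous_snd)⟩

def fBr : C(S × unitInterval, X) := fdPF c.f c.dB

@[simp] lemma dB_zero (s : S) : c.dB (0, s) = s := by
  show c.B (unitInterval.symm 0, s) = s
  rw [symm_zero, c.B.apply_one]; rfl

@[simp] lemma dB_one (s : S) : c.dB (1, s) = c.b' s := by
  show c.B (unitInterval.symm 1, s) = _
  rw [symm_one, c.B.apply_zero]

@[simp] lemma fBr_zero (s : S) : c.fBr (s, 0) = c.f s := by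
  show c.f (c.dB (0, s)) = _
  rw [c.dB_zero]

@[simp] lemma fBr_one (s : S) : c.fBr (s, 1) = c.f (c.b' s) := by
  show c.f (c.dB (1, s)) = _
  rw [c.dB_one]

def ga1 : C(S × unitInterval, X) := cpf c.gM c.Wb (fun s => by simp)

@[simp] lemma ga1_zero (s : S) : c.ga1 (s, 0) = c.g (c.sec (c.f s)) := by
  rw [ga1, cpf_zero, gM_zero]

@[simp] lemma ga1_one (s : S) : c.ga1 (s, 1) = c.f s := by
  rw [ga1, cpf_one, Wb_one]

/-- the path family `γ` -/
def gb : C(S × unitInterval, X) := cpf c.ga1 c.fBr (fun s => by simp)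

@[simp] lemma gb_zero (s : S) : c.gb (s, 0) = c.g (c.sec (c.f s)) := by
  rw [gb, cpf_zero, ga1_zero]

@[simp] lemma gb_one (s : S) : c.gb (s, 1) = c.f (c.b' s) := by
  rw [gb, cpf_one, fBr_one]

def cK : C(unitInterval × S, G) :=
  ⟨fun p => c.K (unitInterval.symm p.1, p.2),
    c.K.continuous.comp ((unitInterval.continuous_symm.comp continuous_fst).prodMk
      continuous_snd)⟩

def gKr : C(S × unitInterval, X) := gcPF c.g c.cK

@[simp] lemma cK_zero (s : S) : c.cK (0, s) = c.sec (c.f s) := by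
  show c.K (unitInterval.symm 0, s) = _
  rw [symm_zero, c.K.apply_one]; rfl

@[simp] lemma cK_one (s : S) : c.cK (1, s) = c.a' s := by
  show c.K (unitInterval.symm 1, s) = _
  rw [symm_one, c.K.apply_zero]

@[simp] lemma gKr_zero (s : S) : c.gKr (s, 0) = c.g (c.sec (c.f s)) := by
  show c.g (c.cK (0, s)) = _
  rw [cK_zero]

@[simp] lemma gKr_one (s : S) : c.gKr (s, 1) = c.g (c.a' s) := by
  show c.g (c.cK (1, s)) = _
  rw [cK_one]

/-- the path family `δ` -/
def db : C(S × unitInterval, X) := cpf c.gKr c.pb (fun s => by rw [gKr_one, c.hp0])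

@[simp] lemma db_zero (s : S) : c.db (s, 0) = c.g (c.sec (c.f s)) := by
  rw [db, cpf_zero, gKr_zero]

@[simp] lemma db_one (s : S) : c.db (s, 1) = c.f (c.b' s) := by
  rw [db, cpf_one, c.hp1]

/-- `τ := hs (·, f s)` -/
def tf : C(S × unitInterval, X) :=
  ⟨fun p => c.hs (p.2, c.f p.1),
    c.hs.continuous.comp (continuous_snd.prodMk ((map_continuous c.f).comp continuous_fst))⟩

@[simp] lemma tf_zero (s : S) : c.tf (s, 0) = c.g (c.sec (c.f s)) := by
  show c.hs (0, c.f s) = _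
  rw [c.hs.apply_zero]; rfl

@[simp] lemma tf_one (s : S) : c.tf (s, 1) = c.f s := by
  show c.hs (1, c.f s) = _
  rw [c.hs.apply_one]; rfl

/-- `γ` reversed -/
def rg : C(S × unitInterval, X) :=
  ⟨fun p => c.gb (p.1, unitInterval.symm p.2),
    (map_continuous c.gb).comp (continuous_fst.prodMk
      (unitInterval.continuous_symm.comp continuous_snd))⟩

@[simp] lemma rg_zero (s : S) : c.rg (s, 0) = c.f (c.b' s) := by
  show c.gb (s, unitInterval.symm 0) = _
  rw [symm_zero, gb_one]

@[simp] lemma rg_one (s : S) : c.rg (s, 1) = c.g (c.sec (c.f s)) := by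
  show c.gb (s, unitInterval.symm 1) = _
  rw [symm_one, gb_zero]

def Xt : C(S × unitInterval, X) := cpf c.rg c.tf (fun s => by simp)

/-- the master path `Π = δ · γ⁻¹ · τ` -/
def Pi : C(S × unitInterval, X) := cpf c.db c.Xt (fun s => by rw [db_one, Xt, cpf_zero, rg_zero])

@[simp] lemma Pi_zero (s : S) : c.Pi (s, 0) = c.g (c.sec (c.f s)) := by
  rw [Pi, cpf_zero, db_zero]

@[simp] lemma Pi_one (s : S) : c.Pi (s, 1) = c.f s := by
  rw [Pi, cpf_one, Xt, cpf_one, tf_one]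

lemma Pi_mid34 (s : S) : c.Pi (s, pj (3/4)) = c.g (c.sec (c.f s)) := by
  have hc : ((pj (3/4) : ℝ)) = 3/4 := coe_pj (by norm_num) (by norm_num)
  rw [Pi, cpf_right (by rw [hc]; norm_num)]
  have h2 : pj (2*((pj (3/4) : ℝ)) - 1) = pj (1/2) := by rw [hc]; norm_num
  rw [h2, Xt]
  have hc2 : ((pj (1/2) : ℝ)) = 1/2 := coe_pj (by norm_num) (by norm_num)
  rw [cpf_left (by rw [hc2]; norm_num)]
  have h3 : pj (2*((pj (1/2) : ℝ))) = 1 := by rw [hc2]; norm_num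
  rw [h3, rg_one]

lemma Pi_half (s : S) : c.Pi (s, pj (1/2)) = c.f (c.b' s) := by
  have hc : ((pj (1/2) : ℝ)) = 1/2 := coe_pj (by norm_num) (by norm_num)
  rw [Pi, cpf_left (by rw [hc]; norm_num)]
  have h2 : pj (2*((pj (1/2) : ℝ))) = 1 := by rw [hc]; norm_num
  rw [h2, db_one]

/-- slide path for the `Gsτ` prefix -/
def ct : C(unitInterval × S, G) :=
  ⟨fun p => c.sec (c.hs (p.1, c.f p.2)),
    (map_continuous c.sec).comp (c.hs.continuous.comp (continuous_fst.prodMk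
      ((map_continuous c.f).comp continuous_snd)))⟩

def Gst : C(S × unitInterval, X) := gcPF c.g c.ct

@[simp] lemma ct_zero (s : S) : c.ct (0, s) = c.sgf s := by
  show c.sec (c.hs (0, c.f s)) = _
  rw [c.hs.apply_zero]; rfl

@[simp] lemma ct_one (s : S) : c.ct (1, s) = c.sf s := by
  show c.sec (c.hs (1, c.f s)) = _
  rw [c.hs.apply_one]; rfl

@[simp] lemma Gst_zero (s : S) : c.Gst (s, 0) = c.g (c.sgf s) := by
  show c.g (c.ct (0, s)) = _
  rw [ct_zero]

@[simp] lemma Gst_one (s : S) : c.Gst (s, 1) = c.g (c.sec (c.f s)) := by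
  show c.g (c.ct (1, s)) = _
  rw [ct_one]; rfl

/-- slide path for the `GsΞ` prefix: `sec ∘ Π(3/4 · t)` -/
def cX : C(unitInterval × S, G) :=
  ⟨fun p => c.sec (c.Pi (p.2, pj (3/4 * p.1))),
    (map_continuous c.sec).comp ((map_continuous c.Pi).comp (continuous_snd.prodMk
      (continuous_pj.comp (continuous_const.mul
        (continuous_subtype_val.comp continuous_fst)))))⟩

def GsX : C(S × unitInterval, X) := gcPF c.g c.cX

@[simp] lemma cX_zero (s : S) : c.cX (0, s) = c.sgf s := by
  show c.sec (c.Pi (s, pj (3/4 * ((0:unitInterval):ℝ)))) = _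
  rw [show (3/4 * ((0:unitInterval):ℝ)) = 0 by norm_num, pj_zero, Pi_zero]; rfl

@[simp] lemma cX_one (s : S) : c.cX (1, s) = c.sgf s := by
  show c.sec (c.Pi (s, pj (3/4 * ((1:unitInterval):ℝ)))) = _
  rw [show (3/4 * ((1:unitInterval):ℝ)) = 3/4 by norm_num, Pi_mid34]; rfl

@[simp] lemma GsX_zero (s : S) : c.GsX (s, 0) = c.g (c.sgf s) := by
  show c.g (c.cX (0, s)) = _
  rw [cX_zero]

@[simp] lemma GsX_one (s : S) : c.GsX (s, 1) = c.g (c.sgf s) := by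
  show c.g (c.cX (1, s)) = _
  rw [cX_one]

/-- `Gsτ · γ` -/
def Gtgb : C(S × unitInterval, X) := cpf c.Gst c.gb (fun s => by rw [Gst_one, gb_zero])

@[simp] lemma Gtgb_zero (s : S) : c.Gtgb (s, 0) = c.g (c.sgf s) := by
  rw [Gtgb, cpf_zero, Gst_zero]

@[simp] lemma Gtgb_one (s : S) : c.Gtgb (s, 1) = c.f (c.b' s) := by
  rw [Gtgb, cpf_one, gb_one]

/-- the state after the two prefix insertions -/
def m4 : C(S × unitInterval, X) :=
  cpf c.GsX c.Gtgb (fun s => by rw [GsX_one, Gtgb_zero])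

@[simp] lemma m4_zero (s : S) : c.m4 (s, 0) = c.g (c.sgf s) := by
  rw [m4, cpf_zero, GsX_zero]

@[simp] lemma m4_one (s : S) : c.m4 (s, 1) = c.f (c.b' s) := by
  rw [m4, cpf_one, Gtgb_one]

lemma m4_mid34 (s : S) : c.m4 (s, pj (3/4)) = c.g (c.sec (c.f s)) := by
  have hc : ((pj (3/4) : ℝ)) = 3/4 := coe_pj (by norm_num) (by norm_num)
  rw [m4, cpf_right (by rw [hc]; norm_num)]
  have h2 : pj (2*((pj (3/4) : ℝ)) - 1) = pj (1/2) := by rw [hc]; norm_num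
  rw [h2, Gtgb]
  have hc2 : ((pj (1/2) : ℝ)) = 1/2 := coe_pj (by norm_num) (by norm_num)
  rw [cpf_left (by rw [hc2]; norm_num)]
  have h3 : pj (2*((pj (1/2) : ℝ))) = 1 := by rw [hc2]; norm_num
  rw [h3, Gst_one]

end Ctx

/-! ### reparametrisation functions -/

def ph1 (u : ℝ) : ℝ := max (min u (3/4)) (4/3*u - 1/3)

lemma ph1_cont : Continuous ph1 := ((continuous_id.min continuous_const).max
  ((continuous_const.mul continuous_id).sub continuous_const))

lemma ph1_zero : ph1 0 = 0 := by norm_num [ph1]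
lemma ph1_one : ph1 1 = 1 := by norm_num [ph1]
lemma ph1_id {u : ℝ} (h0 : 0 ≤ u) (h : u ≤ 3/4) : ph1 u = u := by
  rw [ph1, min_eq_left h, max_eq_left (by linarith)]
lemma ph1_buf {u : ℝ} (h0 : 3/4 ≤ u) (h : u ≤ 13/16) : ph1 u = 3/4 := by
  rw [ph1, min_eq_right h0, max_eq_left (by linarith)]
lemma ph1_tail {u : ℝ} (h0 : 13/16 ≤ u) : ph1 u = 4/3*u - 1/3 := by
  rw [ph1, min_eq_right (by linarith), max_eq_right (by linarith)]

def sv1 (u : ℝ) : ℝ := min 1 (max 0 (32*u - 24))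
def w1 (u : ℝ) : ℝ := min (min (3/2*u) (u + 1/4)) (min 1 (max (29/4 - 8*u) (11/6 - 4/3*u)))
def sv2 (u : ℝ) : ℝ := min 1 (2*u)
def w2 (u : ℝ) : ℝ := max 0 (u - 1/2)
def vt (r : ℝ) : ℝ := min 1 (max 0 (3*r - 1))
def wt (r : ℝ) : ℝ := min (3*r) (min 1 (max (3 - 3*r) 0))
def tent5 (r : ℝ) : ℝ := max 0 (min (3*r - 1) (3 - 3*r))
def ps6 (u : ℝ) : ℝ := max (min (3*u) (1/2)) u

lemma sv1_cont : Continuous sv1 := by unfold sv1; fun_prop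
lemma w1_cont : Continuous w1 := by unfold w1; fun_prop
lemma sv2_cont : Continuous sv2 := by unfold sv2; fun_prop
lemma w2_cont : Continuous w2 := by unfold w2; fun_prop
lemma vt_cont : Continuous vt := by unfold vt; fun_prop
lemma wt_cont : Continuous wt := by unfold wt; fun_prop
lemma tent5_cont : Continuous tent5 := by unfold tent5; fun_prop
lemma ps6_cont : Continuous ps6 := by unfold ps6; fun_prop

namespace Ctx

variable {S G X : Type u} [TopologicalSpace S] [TopologicalSpace G] [TopologicalSpace X]
variable (c : Ctx S G X)

abbrev tc (q : (unitInterval × S) × unitInterval) : ℝ := (q.1.1 : ℝ)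
abbrev uc (q : (unitInterval × S) × unitInterval) : ℝ := (q.2 : ℝ)

lemma tc_cont : Continuous (tc (S := S)) :=
  continuous_subtype_val.comp (continuous_fst.comp continuous_fst)
lemma uc_cont : Continuous (uc (S := S)) := continuous_subtype_val.comp continuous_snd

/-- state: `m4` reparametrised with a buffer -/
def Th : C(S × unitInterval, X) :=
  ⟨fun p => c.m4 (p.1, pj (ph1 p.2)),
    (map_continuous c.m4).comp (continuous_fst.prodMk (continuous_pj.comp
      (ph1_cont.comp (continuous_subtype_val.comp continuous_snd))))⟩

@[simp] lemma Th_zero (s : S) : c.Th (s, 0) = c.g (c.sgf s) := by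
  show c.m4 (s, pj (ph1 ((0:unitInterval):ℝ))) = _
  rw [show ph1 ((0:unitInterval):ℝ) = 0 by rw [Icc.coe_zero, ph1_zero], pj_zero, m4_zero]

@[simp] lemma Th_one (s : S) : c.Th (s, 1) = c.f (c.b' s) := by
  show c.m4 (s, pj (ph1 ((1:unitInterval):ℝ))) = _
  rw [show ph1 ((1:unitInterval):ℝ) = 1 by rw [Icc.coe_one, ph1_one], pj_one, m4_one]

lemma Th_buffer (s : S) {u : unitInterval} (h0 : 3/4 ≤ (u:ℝ)) (h1 : (u:ℝ) ≤ 13/16) :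
    c.Th (s, u) = c.g (c.sec (c.f s)) := by
  show c.m4 (s, pj (ph1 (u:ℝ))) = _
  rw [ph1_buf h0 h1, m4_mid34]

/-- state: the bubble fully grown -/
def Th2 : C(S × unitInterval, X) :=
  ⟨fun p => if |32*(p.2:ℝ) - 25| ≤ 1 then c.hs (pj (1 - |32*(p.2:ℝ) - 25|), c.f p.1)
            else c.Th p, by
    apply Continuous.if_le
    · exact c.hs.continuous.comp ((continuous_pj.comp (continuous_const.sub
        (((continuous_const.mul (continuous_subtype_val.comp continuous_snd)).sub
          continuous_const).abs))).prodMk ((map_continuous c.f).comp continuous_fst))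
    · exact map_continuous c.Th
    · exact ((continuous_const.mul (continuous_subtype_val.comp continuous_snd)).sub
        continuous_const).abs
    · exact continuous_const
    · intro p hp
      rw [hp]
      have hu : (p.2:ℝ) = 3/4 ∨ (p.2:ℝ) = 13/16 := by
        rcases abs_eq (by norm_num : (0:ℝ) ≤ 1) |>.mp hp with h | h
        · right; linarith
        · left; linarith
      have : c.Th p = c.g (c.sec (c.f p.1)) := by
        rcases hu with h | h
        · exact c.Th_buffer p.1 (ge_of_eq h) (by rw [h]; norm_num)
        · exact c.Th_buffer p.1 (by rw [h]; norm_num) (le_of_eq h)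
      rw [this]
      show c.hs (pj (1-1), c.f p.1) = _
      rw [show (1:ℝ)-1 = 0 by norm_num, pj_zero, c.hs.apply_zero]; rfl⟩

/-- state: the square path `σ₁` -/
def Th3 : C(S × unitInterval, X) :=
  ⟨fun p => c.hs (pj (sv1 p.2), c.Pi (p.1, pj (w1 p.2))), by
    refine c.hs.continuous.comp (Continuous.prodMk ?_ ((map_continuous c.Pi).comp
      (continuous_fst.prodMk ?_)))
    · exact continuous_pj.comp (sv1_cont.comp (continuous_subtype_val.comp continuous_snd))
    · exact continuous_pj.comp (w1_cont.comp (continuous_subtype_val.comp continuous_snd))⟩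

/-- state: the square path `σ₂ = Λ · δ` -/
def Th4 : C(S × unitInterval, X) :=
  ⟨fun p => c.hs (pj (sv2 p.2), c.Pi (p.1, pj (w2 p.2))), by
    refine c.hs.continuous.comp (Continuous.prodMk ?_ ((map_continuous c.Pi).comp
      (continuous_fst.prodMk ?_)))
    · exact continuous_pj.comp (sv2_cont.comp (continuous_subtype_val.comp continuous_snd))
    · exact continuous_pj.comp (w2_cont.comp (continuous_subtype_val.comp continuous_snd))⟩

/-- state: the path in the square `Ψτ` -/
def Th5 : C(S × unitInterval, X) :=
  ⟨fun p => if 2*(p.2:ℝ) ≤ 1 then c.hs (pj (vt (2*p.2)), c.hs (pj (wt (2*p.2)), c.f p.1))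
            else c.db (p.1, pj (2*(p.2:ℝ) - 1)), by
    have cu : Continuous fun p : S × unitInterval => ((p.2:ℝ)) :=
      continuous_subtype_val.comp continuous_snd
    apply Continuous.if_le
    · exact c.hs.continuous.comp ((continuous_pj.comp (vt_cont.comp
        (continuous_const.mul cu))).prodMk (c.hs.continuous.comp ((continuous_pj.comp
          (wt_cont.comp (continuous_const.mul cu))).prodMk
            ((map_continuous c.f).comp continuous_fst))))
    · exact (map_continuous c.db).comp (continuous_fst.prodMk (continuous_pj.comp
        ((continuous_const.mul cu).sub continuous_const)))
    · exact continuous_const.mul cu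
    · exact continuous_const
    · intro p hp
      rw [hp]
      rw [show vt 1 = 1 by norm_num [vt], show wt 1 = 0 by norm_num [wt], pj_one, pj_zero,
        c.hs.apply_zero, show (1:ℝ)-1 = 0 by norm_num, pj_zero, db_zero]
      show c.hs (1, _) = _
      rw [c.hs.apply_one]; rfl⟩

/-- state: after removing the bubble -/
def Th6 : C(S × unitInterval, X) :=
  ⟨fun p => if 2*(p.2:ℝ) ≤ 1 then c.g (c.sec (c.hs (pj (min (3*(2*(p.2:ℝ))) 1), c.f p.1)))
            else c.db (p.1, pj (2*(p.2:ℝ) - 1)), by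
    have cu : Continuous fun p : S × unitInterval => ((p.2:ℝ)) :=
      continuous_subtype_val.comp continuous_snd
    apply Continuous.if_le
    · exact (map_continuous c.g).comp ((map_continuous c.sec).comp (c.hs.continuous.comp
        ((continuous_pj.comp ((continuous_const.mul (continuous_const.mul cu)).min
          continuous_const)).prodMk ((map_continuous c.f).comp continuous_fst))))
    · exact (map_continuous c.db).comp (continuous_fst.prodMk (continuous_pj.comp
        ((continuous_const.mul cu).sub continuous_const)))
    · exact continuous_const.mul cu
    · exact continuous_const
    · intro p hp
      rw [hp]
      rw [show min (3*(1:ℝ)) 1 = 1 by norm_num, pj_one, show (1:ℝ)-1 = 0 by norm_num,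
        pj_zero, db_zero]
      show c.g (c.sec (c.hs (1, _))) = _
      rw [c.hs.apply_one]; rfl⟩

/-- state: `Gsτ · δ` -/
def Th7 : C(S × unitInterval, X) := cpf c.Gst c.db (fun s => by rw [Gst_one, db_zero])

@[simp] lemma Th7_zero (s : S) : c.Th7 (s, 0) = c.g (c.sgf s) := by
  rw [Th7, cpf_zero, Gst_zero]

@[simp] lemma Th7_one (s : S) : c.Th7 (s, 1) = c.f (c.b' s) := by
  rw [Th7, cpf_one, db_one]

end Ctx

namespace Ctx

variable {S G X : Type u} [TopologicalSpace S] [TopologicalSpace G] [TopologicalSpace X]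
variable (c : Ctx S G X)

/-! ### missing eval lemmas for the Θ-states -/

@[simp] lemma Th2_zero (s : S) : c.Th2 (s, 0) = c.g (c.sgf s) := by
  show (if |32*(((0:unitInterval)):ℝ) - 25| ≤ 1 then _ else c.Th (s,0)) = _
  rw [if_neg (by rw [Icc.coe_zero]; norm_num), Th_zero]

@[simp] lemma Th2_one (s : S) : c.Th2 (s, 1) = c.f (c.b' s) := by
  show (if |32*(((1:unitInterval)):ℝ) - 25| ≤ 1 then _ else c.Th (s,1)) = _
  rw [if_neg (by rw [Icc.coe_one]; norm_num), Th_one]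

@[simp] lemma Th4_zero (s : S) : c.Th4 (s, 0) = c.g (c.sgf s) := by
  show c.hs (pj (sv2 ((0:unitInterval):ℝ)), c.Pi (s, pj (w2 ((0:unitInterval):ℝ)))) = _
  rw [show sv2 ((0:unitInterval):ℝ) = 0 by rw [Icc.coe_zero]; norm_num [sv2],
    show w2 ((0:unitInterval):ℝ) = 0 by rw [Icc.coe_zero]; norm_num [w2], pj_zero, Pi_zero,
    c.hs.apply_zero]
  rfl

@[simp] lemma Th4_one (s : S) : c.Th4 (s, 1) = c.f (c.b' s) := by
  show c.hs (pj (sv2 ((1:unitInterval):ℝ)), c.Pi (s, pj (w2 ((1:unitInterval):ℝ)))) = _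
  rw [show sv2 ((1:unitInterval):ℝ) = 1 by rw [Icc.coe_one]; norm_num [sv2],
    show w2 ((1:unitInterval):ℝ) = 1/2 by rw [Icc.coe_one]; norm_num [w2], pj_one,
    c.hs.apply_one]
  show c.Pi (s, pj (1/2)) = _
  rw [Pi_half]

@[simp] lemma Th5_zero (s : S) : c.Th5 (s, 0) = c.g (c.sgf s) := by
  show (if 2*(((0:unitInterval)):ℝ) ≤ 1 then
    c.hs (pj (vt (2*((0:unitInterval):ℝ))), c.hs (pj (wt (2*((0:unitInterval):ℝ))), c.f s))
    else _) = _
  rw [if_pos (by rw [Icc.coe_zero]; norm_num), show (2*(((0:unitInterval)):ℝ)) = 0 by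
    rw [Icc.coe_zero]; norm_num,
    show vt 0 = 0 by norm_num [vt], show wt 0 = 0 by norm_num [wt], pj_zero, c.hs.apply_zero,
    c.hs.apply_zero]
  rfl

@[simp] lemma Th5_one (s : S) : c.Th5 (s, 1) = c.f (c.b' s) := by
  show (if 2*(((1:unitInterval)):ℝ) ≤ 1 then _
    else c.db (s, pj (2*(((1:unitInterval)):ℝ) - 1))) = _
  rw [if_neg (by rw [Icc.coe_one]; norm_num), show (2*(((1:unitInterval)):ℝ) - 1) = 1 by
    rw [Icc.coe_one]; norm_num, pj_one, db_one]

@[simp] lemma Th6_zero (s : S) : c.Th6 (s, 0) = c.g (c.sgf s) := by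
  show (if 2*(((0:unitInterval)):ℝ) ≤ 1 then
    c.g (c.sec (c.hs (pj (min (3*(2*((0:unitInterval):ℝ))) 1), c.f s))) else _) = _
  rw [if_pos (by rw [Icc.coe_zero]; norm_num),
    show min (3*(2*(((0:unitInterval)):ℝ))) 1 = 0 by rw [Icc.coe_zero]; norm_num, pj_zero,
    c.hs.apply_zero]
  rfl

@[simp] lemma Th6_one (s : S) : c.Th6 (s, 1) = c.f (c.b' s) := by
  show (if 2*(((1:unitInterval)):ℝ) ≤ 1 then _
    else c.db (s, pj (2*(((1:unitInterval)):ℝ) - 1))) = _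
  rw [if_neg (by rw [Icc.coe_one]; norm_num), show (2*(((1:unitInterval)):ℝ) - 1) = 1 by
    rw [Icc.coe_one]; norm_num, pj_one, db_one]

/-! ### the pointwise identifications (hard computations) -/


lemma m4_left (s : S) {x : ℝ} (h0 : 0 ≤ x) (h : 2*x ≤ 1) :
    c.m4 (s, pj x) = c.g (c.sec (c.Pi (s, pj (3/2*x)))) := by
  rw [m4, cpf_pj_left s h0 (by linarith) h]
  show c.g (c.cX (pj (2*x), s)) = _
  show c.g (c.sec (c.Pi (s, pj (3/4 * ((pj (2*x)):ℝ))))) = _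
  rw [coe_pj (by linarith) (by linarith), show (3:ℝ)/4*(2*x) = 3/2*x by ring]

lemma m4_mid (s : S) {x : ℝ} (h : ¬ (2*x ≤ 1)) (h2 : x ≤ 3/4) :
    c.m4 (s, pj x) = c.g (c.sec (c.hs (pj (4*x - 2), c.f s))) := by
  rw [m4, cpf_pj_right s (by linarith) (by linarith) h, Gtgb,
    cpf_pj_left s (by linarith) (by linarith) (by linarith)]
  show c.g (c.ct (pj (2*(2*x - 1)), s)) = _
  rw [show 2*(2*x - 1) = 4*x - 2 by ring]
  rfl

lemma m4_right (s : S) {x : ℝ} (h : ¬ (x ≤ 3/4)) (hx1 : x ≤ 1) :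
    c.m4 (s, pj x) = c.gb (s, pj (4*x - 3)) := by
  rw [m4, cpf_pj_right s (by linarith) hx1 (by intro hc; exact h (by linarith)), Gtgb,
    cpf_pj_right s (by linarith) (by linarith) (by intro hc; exact h (by linarith)),
    show 2*(2*x - 1) - 1 = 4*x - 3 by ring]

lemma Pi_tf (s : S) {x : ℝ} (h34 : ¬ (x ≤ 3/4)) (hx1 : x ≤ 1) :
    c.Pi (s, pj x) = c.hs (pj (4*x - 3), c.f s) := by
  rw [Pi, cpf_pj_right s (by linarith) hx1 (by intro hc; exact h34 (by linarith)), Xt,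
    cpf_pj_right s (by linarith) (by linarith) (by intro hc; exact h34 (by linarith)),
    show 2*(2*x - 1) - 1 = 4*x - 3 by ring]
  rfl

lemma Pi_rg (s : S) {x : ℝ} (h12 : ¬ (2*x ≤ 1)) (h34 : x ≤ 3/4) :
    c.Pi (s, pj x) = c.gb (s, pj (3 - 4*x)) := by
  rw [Pi, cpf_pj_right s (by linarith) (by linarith) h12, Xt,
    cpf_pj_left s (by linarith) (by linarith) (by linarith),
    show 2*(2*x - 1) = 4*x - 2 by ring]
  show c.gb (s, unitInterval.symm (pj (4*x - 2))) = _
  rw [symm_pj, show 1 - (4*x - 2) = 3 - 4*x by ring]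

lemma Th2_eq_Th3 : ∀ (s : S) (u : unitInterval), c.Th2 (s, u) = c.Th3 (s, u) := by
  intro s u
  have hu0 := coeI_nonneg u
  have hu1 := coeI_le_one u
  show (if |32*(u:ℝ) - 25| ≤ 1 then c.hs (pj (1 - |32*(u:ℝ) - 25|), c.f s) else c.Th (s, u))
    = c.hs (pj (sv1 (u:ℝ)), c.Pi (s, pj (w1 (u:ℝ))))
  by_cases hA : |32*(u:ℝ) - 25| ≤ 1
  · -- the bubble region: `3/4 ≤ u ≤ 13/16`
    rw [if_pos hA]
    obtain ⟨hb1, hb2⟩ := abs_le.mp hA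
    rcases le_or_gt (32*(u:ℝ) - 25) 0 with hneg | hpos
    · -- region 3 : `3/4 ≤ u ≤ 25/32`
      rw [abs_of_nonpos hneg, show 1 - -(32*(u:ℝ) - 25) = 32*(u:ℝ) - 24 by ring]
      rw [show sv1 (u:ℝ) = 32*(u:ℝ) - 24 by
        rw [sv1, max_eq_right (by linarith), min_eq_right (by linarith)]]
      rw [show w1 (u:ℝ) = 1 by
        rw [w1, min_eq_right (show (u:ℝ) + 1/4 ≤ 3/2*(u:ℝ) by linarith),
          min_eq_left (le_trans (show (1:ℝ) ≤ 29/4 - 8*(u:ℝ) by linarith) (le_max_left _ _)),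
          min_eq_right (show (1:ℝ) ≤ (u:ℝ) + 1/4 by linarith)]]
      rw [pj_one, Pi_one]
    · -- region 4 : `25/32 < u ≤ 13/16`
      rw [abs_of_pos hpos, show 1 - (32*(u:ℝ) - 25) = 26 - 32*(u:ℝ) by ring]
      rw [show sv1 (u:ℝ) = 1 by
        rw [sv1, max_eq_right (by linarith), min_eq_left (by linarith)]]
      rw [pj_one, c.hs.apply_one]
      rcases lt_or_eq_of_le hb2 with hlt | heq
      · -- `u < 13/16`
        rw [show w1 (u:ℝ) = 29/4 - 8*(u:ℝ) by
          rw [w1, min_eq_right (show (u:ℝ) + 1/4 ≤ 3/2*(u:ℝ) by linarith),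
            max_eq_left (show 11/6 - 4/3*(u:ℝ) ≤ 29/4 - 8*(u:ℝ) by linarith),
            min_eq_right (show 29/4 - 8*(u:ℝ) ≤ 1 by linarith),
            min_eq_right (show 29/4 - 8*(u:ℝ) ≤ (u:ℝ) + 1/4 by linarith)]]
        rw [c.Pi_tf s (show ¬ (29/4 - 8*(u:ℝ) ≤ 3/4) by intro hc; linarith) (by linarith),
          show 4*(29/4 - 8*(u:ℝ)) - 3 = 26 - 32*(u:ℝ) by ring]
        rfl
      · -- `u = 13/16`
        have hu : (u:ℝ) = 13/16 := by linarith
        rw [hu]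
        rw [show w1 (13/16 : ℝ) = 3/4 by
          rw [w1, min_eq_right (show (13:ℝ)/16 + 1/4 ≤ 3/2*(13/16) by norm_num),
            max_eq_left (show (11:ℝ)/6 - 4/3*(13/16) ≤ 29/4 - 8*(13/16) by norm_num),
            min_eq_right (show (29:ℝ)/4 - 8*(13/16) ≤ 1 by norm_num),
            min_eq_right (show (29:ℝ)/4 - 8*(13/16) ≤ 13/16 + 1/4 by norm_num)]
          norm_num]
        rw [show (26:ℝ) - 32*(13/16) = 0 by norm_num, pj_zero, c.hs.apply_zero,
          show ((3:ℝ)/4) = (3/4 : ℝ) by norm_num, Pi_mid34]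
        rfl
  · rw [if_neg hA]
    show c.m4 (s, pj (ph1 (u:ℝ))) = _
    rcases le_or_gt (u:ℝ) (1/2) with h12 | h12
    · -- region 1 : `u ≤ 1/2`
      rw [ph1_id hu0 (by linarith), c.m4_left s hu0 (by linarith)]
      rw [show sv1 (u:ℝ) = 0 by
        rw [sv1, max_eq_left (by linarith), min_eq_right (by norm_num)]]
      rw [show w1 (u:ℝ) = 3/2*(u:ℝ) by
        rw [w1, min_eq_left (show (3:ℝ)/2*(u:ℝ) ≤ (u:ℝ) + 1/4 by linarith),
          min_eq_left (le_trans (show (1:ℝ) ≤ 29/4 - 8*(u:ℝ) by linarith) (le_max_left _ _)),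
          min_eq_left (show (3:ℝ)/2*(u:ℝ) ≤ 1 by linarith)]]
      rw [pj_zero, c.hs.apply_zero]
      rfl
    rcases lt_or_ge (u:ℝ) (3/4) with h34 | h34
    · -- region 2 : `1/2 < u < 3/4`
      rw [ph1_id hu0 (by linarith), c.m4_mid s (by intro hc; linarith) (by linarith)]
      rw [show sv1 (u:ℝ) = 0 by
        rw [sv1, max_eq_left (by linarith), min_eq_right (by norm_num)]]
      rw [show w1 (u:ℝ) = (u:ℝ) + 1/4 by
        rw [w1, min_eq_right (show (u:ℝ) + 1/4 ≤ 3/2*(u:ℝ) by linarith),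
          min_eq_left (le_trans (show (1:ℝ) ≤ 29/4 - 8*(u:ℝ) by linarith) (le_max_left _ _)),
          min_eq_left (show (u:ℝ) + 1/4 ≤ 1 by linarith)]]
      rw [c.Pi_tf s (show ¬ ((u:ℝ) + 1/4 ≤ 3/4) by intro hc; linarith) (by linarith),
        show 4*((u:ℝ) + 1/4) - 3 = 4*(u:ℝ) - 2 by ring]
      rw [pj_zero, c.hs.apply_zero]
      rfl
    · -- `u > 13/16` (since `¬ hA` and `u ≥ 3/4`)
      have h1316 : (13:ℝ)/16 < (u:ℝ) := by
        by_contra hc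
        push_neg at hc
        exact hA (abs_le.mpr ⟨by linarith, by linarith⟩)
      rw [ph1_tail (by linarith)]
      rw [show sv1 (u:ℝ) = 1 by
        rw [sv1, max_eq_right (by linarith), min_eq_left (by linarith)]]
      rw [pj_one, c.hs.apply_one]
      rcases lt_or_eq_of_le hu1 with hlt | heq
      · -- region 5 : `13/16 < u < 1`
        rw [c.m4_right s (show ¬ (4/3*(u:ℝ) - 1/3 ≤ 3/4) by intro hc; linarith) (by linarith)]
        rw [show w1 (u:ℝ) = 11/6 - 4/3*(u:ℝ) by
          rw [w1, min_eq_right (show (u:ℝ) + 1/4 ≤ 3/2*(u:ℝ) by linarith),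
            max_eq_right (show (29:ℝ)/4 - 8*(u:ℝ) ≤ 11/6 - 4/3*(u:ℝ) by linarith),
            min_eq_right (show (11:ℝ)/6 - 4/3*(u:ℝ) ≤ 1 by linarith),
            min_eq_right (show (11:ℝ)/6 - 4/3*(u:ℝ) ≤ (u:ℝ) + 1/4 by linarith)]]
        rw [c.Pi_rg s (show ¬ (2*((11:ℝ)/6 - 4/3*(u:ℝ)) ≤ 1) by intro hc; linarith)
          (by linarith)]
        rw [show 4*(4/3*(u:ℝ) - 1/3) - 3 = 16/3*(u:ℝ) - 13/3 by ring,
          show 3 - 4*((11:ℝ)/6 - 4/3*(u:ℝ)) = 16/3*(u:ℝ) - 13/3 by ring]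
        rfl
      · -- region 6 : `u = 1`
        rw [heq]
        rw [show 4/3*(1:ℝ) - 1/3 = 1 by norm_num, pj_one, m4_one]
        rw [show w1 (1:ℝ) = 1/2 by norm_num [w1]]
        rw [Pi_half]
        rfl


lemma C4_zero_eq : ∀ (s : S) (u : unitInterval),
    (if 2*(u:ℝ) ≤ 1 then c.hs (pj ((2*(u:ℝ))), c.hs (pj (0 : ℝ), c.f s))
     else c.db (s, pj (2*(u:ℝ) - 1))) = c.Th4 (s, u) := by
  intro s u
  have hu0 := coeI_nonneg u
  have hu1 := coeI_le_one u
  show _ = c.hs (pj (sv2 (u:ℝ)), c.Pi (s, pj (w2 (u:ℝ))))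
  by_cases h : 2*(u:ℝ) ≤ 1
  · rw [if_pos h, pj_zero, c.hs.apply_zero,
      show sv2 (u:ℝ) = 2*(u:ℝ) by rw [sv2, min_eq_right h],
      show w2 (u:ℝ) = 0 by rw [w2, max_eq_left (by linarith)], pj_zero, Pi_zero]
    rfl
  · rw [if_neg h, show sv2 (u:ℝ) = 1 by rw [sv2, min_eq_left (by linarith)], pj_one,
      c.hs.apply_one, show w2 (u:ℝ) = (u:ℝ) - 1/2 by rw [w2, max_eq_right (by linarith)]]
    show _ = c.Pi (s, pj ((u:ℝ) - 1/2))
    rw [Pi, cpf_pj_left s (by linarith) (by linarith) (by linarith),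
      show 2*((u:ℝ) - 1/2) = 2*(u:ℝ) - 1 by ring]

lemma C5_zero_eq : ∀ (s : S) (u : unitInterval),
    (if 2*(u:ℝ) ≤ 1 then c.hs (pj (tent5 (2*(u:ℝ))), c.hs (pj (min (3*(2*(u:ℝ))) 1), c.f s))
     else c.db (s, pj (2*(u:ℝ) - 1))) = c.Th5 (s, u) := by
  intro s u
  have hu0 := coeI_nonneg u
  show _ = (if 2*(u:ℝ) ≤ 1 then c.hs (pj (vt (2*u)), c.hs (pj (wt (2*u)), c.f s))
            else c.db (s, pj (2*(u:ℝ) - 1)))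
  by_cases h : 2*(u:ℝ) ≤ 1
  · rw [if_pos h, if_pos h]
    set r : ℝ := 2*(u:ℝ) with hr
    have hr0 : 0 ≤ r := by positivity
    rcases le_or_gt r (1/3) with h3 | h3
    · rw [show tent5 r = 0 by
          rw [tent5, max_eq_left (by rw [min_le_iff]; left; linarith)],
        show vt r = 0 by
          rw [vt, max_eq_left (show 3*r - 1 ≤ 0 by linarith),
            min_eq_right (show (0:ℝ) ≤ 1 by norm_num)],
        show wt r = 3*r by
          rw [wt, max_eq_left (show (0:ℝ) ≤ 3 - 3*r by linarith),
            min_eq_left (show (1:ℝ) ≤ 3 - 3*r by linarith),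
            min_eq_left (show 3*r ≤ 1 by linarith)],
        show min (3*r) 1 = 3*r by rw [min_eq_left (show 3*r ≤ 1 by linarith)]]
    rcases le_or_gt r (2/3) with h6 | h6
    · rw [show tent5 r = 3*r - 1 by
          rw [tent5, min_eq_left (show 3*r - 1 ≤ 3 - 3*r by linarith),
            max_eq_right (show (0:ℝ) ≤ 3*r - 1 by linarith)],
        show vt r = 3*r - 1 by
          rw [vt, max_eq_right (show (0:ℝ) ≤ 3*r - 1 by linarith),
            min_eq_right (show 3*r - 1 ≤ 1 by linarith)],
        show wt r = 1 by
          rw [wt, max_eq_left (show (0:ℝ) ≤ 3 - 3*r by linarith),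
            min_eq_left (show (1:ℝ) ≤ 3 - 3*r by linarith),
            min_eq_right (show (1:ℝ) ≤ 3*r by linarith)],
        show min (3*r) 1 = 1 by rw [min_eq_right (show (1:ℝ) ≤ 3*r by linarith)], pj_one]
    · rw [show tent5 r = 3 - 3*r by
          rw [tent5, min_eq_right (show 3 - 3*r ≤ 3*r - 1 by linarith),
            max_eq_right (show (0:ℝ) ≤ 3 - 3*r by linarith)],
        show vt r = 1 by
          rw [vt, max_eq_right (show (0:ℝ) ≤ 3*r - 1 by linarith),
            min_eq_left (show (1:ℝ) ≤ 3*r - 1 by linarith)],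
        show wt r = 3 - 3*r by
          rw [wt, max_eq_left (show (0:ℝ) ≤ 3 - 3*r by linarith),
            min_eq_right (show (3:ℝ) - 3*r ≤ 1 by linarith),
            min_eq_right (show (3:ℝ) - 3*r ≤ 3*r by linarith)],
        show min (3*r) 1 = 1 by rw [min_eq_right (show (1:ℝ) ≤ 3*r by linarith)], pj_one,
        c.hs.apply_one, c.hs.apply_one]
      rfl
  · rw [if_neg h, if_neg h]

lemma C6_zero_eq : ∀ (s : S) (u : unitInterval),
    c.Th7 (s, pj (ps6 (u:ℝ))) = c.Th6 (s, u) := by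
  intro s u
  have hu0 := coeI_nonneg u
  have hu1 := coeI_le_one u
  show _ = (if 2*(u:ℝ) ≤ 1 then c.g (c.sec (c.hs (pj (min (3*(2*(u:ℝ))) 1), c.f s)))
            else c.db (s, pj (2*(u:ℝ) - 1)))
  by_cases h : 2*(u:ℝ) ≤ 1
  · rw [if_pos h]
    rcases le_or_gt (u:ℝ) (1/6) with h6 | h6
    · rw [show ps6 (u:ℝ) = 3*(u:ℝ) by
          rw [ps6, min_eq_left (by linarith), max_eq_left (by linarith)]]
      rw [Th7, cpf_pj_left s (by linarith) (by linarith) (by linarith)]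
      rw [show min (3*(2*(u:ℝ))) 1 = 2*(3*(u:ℝ)) by
        rw [min_eq_left (by linarith)]; ring]
      rfl
    · rw [show ps6 (u:ℝ) = 1/2 by
          rw [ps6, min_eq_right (by linarith), max_eq_left (by linarith)]]
      rw [Th7, cpf_pj_left s (by norm_num) (by norm_num) (by norm_num)]
      rw [show 2*((1:ℝ)/2) = 1 by norm_num, pj_one,
        show min (3*(2*(u:ℝ))) 1 = 1 by rw [min_eq_right (by linarith)], pj_one]
      rfl
  · rw [if_neg h]
    rw [show ps6 (u:ℝ) = (u:ℝ) by
        rw [ps6, min_eq_right (by linarith), max_eq_right (by linarith)], pj_coe]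
    rw [Th7, cpf_right h]

end Ctx

namespace Ctx

variable {S G X : Type u} [TopologicalSpace S] [TopologicalSpace G] [TopologicalSpace X]
variable (c : Ctx S G X)

/-! ### the states -/

def qTh : C(S, HPb c.g c.f) :=
  mkH c.g c.f c.om c.Wb (ContinuousMap.id S) c.Wb_zero c.Wb_one
def qA : C(S, HPb c.g c.f) :=
  mkH c.g c.f c.sf c.ga1 (ContinuousMap.id S) c.ga1_zero c.ga1_one
def qB : C(S, HPb c.g c.f) := mkH c.g c.f c.sf c.gb c.b' c.gb_zero c.gb_one
def q1 : C(S, HPb c.g c.f) := mkH c.g c.f c.sgf c.Gtgb c.b' c.Gtgb_zero c.Gtgb_one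
def q2 : C(S, HPb c.g c.f) := mkH c.g c.f c.sgf c.m4 c.b' c.m4_zero c.m4_one
def q3 : C(S, HPb c.g c.f) := mkH c.g c.f c.sgf c.Th c.b' c.Th_zero c.Th_one
def q4 : C(S, HPb c.g c.f) := mkH c.g c.f c.sgf c.Th2 c.b' c.Th2_zero c.Th2_one
def q6 : C(S, HPb c.g c.f) := mkH c.g c.f c.sgf c.Th4 c.b' c.Th4_zero c.Th4_one
def q7 : C(S, HPb c.g c.f) := mkH c.g c.f c.sgf c.Th5 c.b' c.Th5_zero c.Th5_one
def q8 : C(S, HPb c.g c.f) := mkH c.g c.f c.sgf c.Th6 c.b' c.Th6_zero c.Th6_one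
def q9 : C(S, HPb c.g c.f) := mkH c.g c.f c.sgf c.Th7 c.b' c.Th7_zero c.Th7_one
def q10 : C(S, HPb c.g c.f) := mkH c.g c.f c.sf c.db c.b' c.db_zero c.db_one
def q11 : C(S, HPb c.g c.f) := mkH c.g c.f c.a' c.pb c.b' c.hp0 c.hp1

/-! ### constant controls -/

def cnstA : C(unitInterval × S, G) :=
  ⟨fun p => c.sgf p.2, (map_continuous c.sgf).comp continuous_snd⟩
def cnstB : C(unitInterval × S, S) :=
  ⟨fun p => c.b' p.2, (map_continuous c.b').comp continuous_snd⟩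

/-! ### the moves -/

lemma jA1 : ∀ s, c.Wb (s, 0) = c.g (c.cM (1, s)) := fun s => by
  rw [Wb_zero]
  show _ = c.g (c.M (1,s))
  rw [c.M.apply_one]

lemma jA1' : ∀ s : S, (gcPF c.g c.cM) (s, 1) = c.Wb (s, 0) := fun s => by
  show c.gM (s,1) = _
  rw [gM_one, Wb_zero]

/-- A1: slide `ω ⇝ sec∘f` along `M`, prefixing `g∘M`. -/
def mvA1 : ContinuousMap.Homotopy c.qA c.qTh :=
  bigmove c.g c.f c.cM (⟨fun p => p.2, continuous_snd⟩)
    (emoveP c.g c.cM c.Wb c.jA1)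
    (fun p => emoveP_e0 _ _ _ _ p)
    (fun p => by rw [emoveP_e1, Wb_one]; rfl)
    c.sf c.om (ContinuousMap.id S) (ContinuousMap.id S) c.ga1 c.Wb
    (fun s => by show c.M (0, s) = _; rw [c.M.apply_zero]; rfl)
    (fun s => by show c.M (1, s) = _; rw [c.M.apply_one])
    (fun s => rfl) (fun s => rfl)
    (fun s u => emoveP_zero _ _ _ _ c.jA1' s u)
    (fun s u => emoveP_one _ _ _ _ s u)

lemma jA2 : ∀ s, c.ga1 (s, 1) = c.f (c.dB (0, s)) := fun s => by
  rw [ga1_one, dB_zero]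

/-- A2: grow the tail `f∘B⁻¹` while `b` moves `id ⇝ b'`. -/
def mvA2 : ContinuousMap.Homotopy c.qA c.qB :=
  bigmove c.g c.f
    (⟨fun p => c.sf p.2, (map_continuous c.sf).comp continuous_snd⟩) c.dB
    (tmoveP c.f c.ga1 c.dB c.jA2)
    (fun p => by rw [tmoveP_e0, ga1_zero]; rfl)
    (fun p => tmoveP_e1 _ _ _ _ p)
    c.sf c.sf (ContinuousMap.id S) c.b' c.ga1 c.gb
    (fun s => rfl) (fun s => rfl)
    (fun s => c.dB_zero s) (fun s => c.dB_one s)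
    (fun s u => tmoveP_zero _ _ _ _ s u)
    (fun s u => tmoveP_one _ _ _ _ c.jA2 s u)

lemma jC1 : ∀ s, c.gb (s, 0) = c.g (c.ct (1, s)) := fun s => by
  rw [gb_zero, ct_one]; rfl

lemma jC1' : ∀ s : S, (gcPF c.g c.ct) (s, 1) = c.gb (s, 0) := fun s => by
  show c.Gst (s, 1) = _
  rw [Gst_one, gb_zero]

/-- C1: slide `sec∘f ⇝ sgf` along `sec∘τ⁻¹`, prefixing `Gsτ`. -/
def mvC1 : ContinuousMap.Homotopy c.q1 c.qB :=
  bigmove c.g c.f c.ct c.cnstB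
    (emoveP c.g c.ct c.gb c.jC1)
    (fun p => emoveP_e0 _ _ _ _ p)
    (fun p => by rw [emoveP_e1, gb_one]; rfl)
    c.sgf c.sf c.b' c.b' c.Gtgb c.gb
    (fun s => c.ct_zero s) (fun s => c.ct_one s)
    (fun s => rfl) (fun s => rfl)
    (fun s u => emoveP_zero _ _ _ _ c.jC1' s u)
    (fun s u => emoveP_one _ _ _ _ s u)

lemma jC2 : ∀ s, c.Gtgb (s, 0) = c.g (c.cX (1, s)) := fun s => by
  rw [Gtgb_zero, cX_one]

lemma jC2' : ∀ s : S, (gcPF c.g c.cX) (s, 1) = c.Gtgb (s, 0) := fun s => by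
  show c.GsX (s, 1) = _
  rw [GsX_one, Gtgb_zero]

/-- C2: slide `sgf` around the loop `sec∘Ξ`, prefixing `GsΞ`. -/
def mvC2 : ContinuousMap.Homotopy c.q2 c.q1 :=
  bigmove c.g c.f c.cX c.cnstB
    (emoveP c.g c.cX c.Gtgb c.jC2)
    (fun p => emoveP_e0 _ _ _ _ p)
    (fun p => by rw [emoveP_e1, Gtgb_one]; rfl)
    c.sgf c.sgf c.b' c.b' c.m4 c.Gtgb
    (fun s => c.cX_zero s) (fun s => c.cX_one s)
    (fun s => rfl) (fun s => rfl)
    (fun s u => emoveP_zero _ _ _ _ c.jC2' s u)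
    (fun s u => emoveP_one _ _ _ _ s u)

end Ctx

namespace Ctx

variable {S G X : Type u} [TopologicalSpace S] [TopologicalSpace G] [TopologicalSpace X]
variable (c : Ctx S G X)

/-! ### the parametrised-move formulas -/

def P23 : C((unitInterval × S) × unitInterval, X) :=
  ⟨fun q => c.m4 (q.1.2, pj ((1 - tc q)*uc q + tc q * ph1 (uc q))),
    (map_continuous c.m4).comp ((continuous_snd.comp continuous_fst).prodMk
      (continuous_pj.comp (((continuous_const.sub tc_cont).mul uc_cont).add
        (tc_cont.mul (ph1_cont.comp uc_cont)))))⟩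

def mvC23 : ContinuousMap.Homotopy c.q2 c.q3 :=
  bigmove c.g c.f c.cnstA c.cnstB c.P23
    (fun p => by
      show c.m4 (p.2, pj ((1 - (p.1:ℝ))*(((0:unitInterval)):ℝ)
        + (p.1:ℝ) * ph1 (((0:unitInterval)):ℝ))) = _
      rw [show ((1 - (p.1:ℝ))*(((0:unitInterval)):ℝ)
        + (p.1:ℝ) * ph1 (((0:unitInterval)):ℝ)) = 0 by rw [Icc.coe_zero, ph1_zero]; ring,
        pj_zero, m4_zero]
      rfl)
    (fun p => by
      show c.m4 (p.2, pj ((1 - (p.1:ℝ))*(((1:unitInterval)):ℝ)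
        + (p.1:ℝ) * ph1 (((1:unitInterval)):ℝ))) = _
      rw [show ((1 - (p.1:ℝ))*(((1:unitInterval)):ℝ)
        + (p.1:ℝ) * ph1 (((1:unitInterval)):ℝ)) = 1 by rw [Icc.coe_one, ph1_one]; ring,
        pj_one, m4_one]
      rfl)
    c.sgf c.sgf c.b' c.b' c.m4 c.Th
    (fun s => rfl) (fun s => rfl) (fun s => rfl) (fun s => rfl)
    (fun s u => by
      show c.m4 (s, pj ((1 - (((0:unitInterval)):ℝ))*(u:ℝ)
        + (((0:unitInterval)):ℝ) * ph1 (u:ℝ))) = _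
      rw [show ((1 - (((0:unitInterval)):ℝ))*(u:ℝ)
        + (((0:unitInterval)):ℝ) * ph1 (u:ℝ)) = (u:ℝ) by rw [Icc.coe_zero]; ring, pj_coe])
    (fun s u => by
      show c.m4 (s, pj ((1 - (((1:unitInterval)):ℝ))*(u:ℝ)
        + (((1:unitInterval)):ℝ) * ph1 (u:ℝ))) = c.Th (s, u)
      rw [show ((1 - (((1:unitInterval)):ℝ))*(u:ℝ)
        + (((1:unitInterval)):ℝ) * ph1 (u:ℝ)) = ph1 (u:ℝ) by rw [Icc.coe_one]; ring]
      rfl)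

def P25 : C((unitInterval × S) × unitInterval, X) :=
  ⟨fun q => if |32*uc q - 25| ≤ 1 then
      c.hs (pj (tc q * (1 - |32*uc q - 25|)), c.f q.1.2)
    else c.Th (q.1.2, q.2), by
    apply Continuous.if_le
    · exact c.hs.continuous.comp ((continuous_pj.comp (tc_cont.mul (continuous_const.sub
        ((continuous_const.mul uc_cont).sub continuous_const).abs))).prodMk
          ((map_continuous c.f).comp (continuous_snd.comp continuous_fst)))
    · exact (map_continuous c.Th).comp ((continuous_snd.comp continuous_fst).prodMk
        continuous_snd)
    · exact ((continuous_const.mul uc_cont).sub continuous_const).abs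
    · exact continuous_const
    · intro q hq
      rw [hq]
      have hu : (q.2:ℝ) = 3/4 ∨ (q.2:ℝ) = 13/16 := by
        rcases abs_eq (by norm_num : (0:ℝ) ≤ 1) |>.mp hq with h | h
        · right; linarith
        · left; linarith
      have h2 : c.Th (q.1.2, q.2) = c.g (c.sec (c.f q.1.2)) := by
        rcases hu with h | h
        · exact c.Th_buffer q.1.2 (ge_of_eq h) (by rw [h]; norm_num)
        · exact c.Th_buffer q.1.2 (by rw [h]; norm_num) (le_of_eq h)
      rw [h2, show (tc q * (1 - 1)) = 0 by ring, pj_zero, c.hs.apply_zero]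
      rfl⟩

def mvC25 : ContinuousMap.Homotopy c.q3 c.q4 :=
  bigmove c.g c.f c.cnstA c.cnstB c.P25
    (fun p => by
      show (if |32*(((0:unitInterval)):ℝ) - 25| ≤ 1 then _ else c.Th (p.2, 0)) = _
      rw [if_neg (by rw [Icc.coe_zero]; norm_num), Th_zero]
      rfl)
    (fun p => by
      show (if |32*(((1:unitInterval)):ℝ) - 25| ≤ 1 then _ else c.Th (p.2, 1)) = _
      rw [if_neg (by rw [Icc.coe_one]; norm_num), Th_one]
      rfl)
    c.sgf c.sgf c.b' c.b' c.Th c.Th2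
    (fun s => rfl) (fun s => rfl) (fun s => rfl) (fun s => rfl)
    (fun s u => by
      show (if |32*(u:ℝ) - 25| ≤ 1 then
          c.hs (pj ((((0:unitInterval)):ℝ) * (1 - |32*(u:ℝ) - 25|)), c.f s)
        else c.Th (s, u)) = c.Th (s, u)
      split_ifs with h
      · have hb : c.Th (s, u) = c.g (c.sec (c.f s)) := by
          rcases abs_le.mp h with ⟨h1, h2⟩
          exact c.Th_buffer s (by linarith) (by linarith)
        rw [hb, show ((((0:unitInterval)):ℝ) * (1 - |32*(u:ℝ) - 25|)) = 0 by
          rw [Icc.coe_zero]; ring, pj_zero, c.hs.apply_zero]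
        rfl
      · rfl)
    (fun s u => by
      show (if |32*(u:ℝ) - 25| ≤ 1 then
          c.hs (pj ((((1:unitInterval)):ℝ) * (1 - |32*(u:ℝ) - 25|)), c.f s)
        else c.Th (s, u)) = c.Th2 (s, u)
      show _ = (if |32*(u:ℝ) - 25| ≤ 1 then c.hs (pj (1 - |32*(u:ℝ) - 25|), c.f s)
        else c.Th (s, u))
      split_ifs with h
      · rw [show ((((1:unitInterval)):ℝ) * (1 - |32*(u:ℝ) - 25|)) = (1 - |32*(u:ℝ) - 25|) by
          rw [Icc.coe_one]; ring]
      · rfl)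

def P3 : C((unitInterval × S) × unitInterval, X) :=
  ⟨fun q => c.hs (pj ((1 - tc q)*sv1 (uc q) + tc q*sv2 (uc q)),
      c.Pi (q.1.2, pj ((1 - tc q)*w1 (uc q) + tc q*w2 (uc q)))), by
    refine c.hs.continuous.comp (Continuous.prodMk ?_ ((map_continuous c.Pi).comp
      ((continuous_snd.comp continuous_fst).prodMk ?_)))
    · exact continuous_pj.comp (((continuous_const.sub tc_cont).mul
        (sv1_cont.comp uc_cont)).add (tc_cont.mul (sv2_cont.comp uc_cont)))
    · exact continuous_pj.comp (((continuous_const.sub tc_cont).mul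
        (w1_cont.comp uc_cont)).add (tc_cont.mul (w2_cont.comp uc_cont)))⟩

def mvC3 : ContinuousMap.Homotopy c.q4 c.q6 :=
  bigmove c.g c.f c.cnstA c.cnstB c.P3
    (fun p => by
      show c.hs (pj ((1 - (p.1:ℝ))*sv1 (((0:unitInterval)):ℝ)
          + (p.1:ℝ)*sv2 (((0:unitInterval)):ℝ)),
        c.Pi (p.2, pj ((1 - (p.1:ℝ))*w1 (((0:unitInterval)):ℝ)
          + (p.1:ℝ)*w2 (((0:unitInterval)):ℝ)))) = _
      rw [show ((1 - (p.1:ℝ))*sv1 (((0:unitInterval)):ℝ)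
          + (p.1:ℝ)*sv2 (((0:unitInterval)):ℝ)) = 0 by
        rw [Icc.coe_zero, show sv1 0 = 0 by norm_num [sv1], show sv2 0 = 0 by norm_num [sv2]]
        ring]
      rw [show ((1 - (p.1:ℝ))*w1 (((0:unitInterval)):ℝ)
          + (p.1:ℝ)*w2 (((0:unitInterval)):ℝ)) = 0 by
        rw [Icc.coe_zero, show w1 0 = 0 by norm_num [w1], show w2 0 = 0 by norm_num [w2]]
        ring]
      rw [pj_zero, Pi_zero, c.hs.apply_zero]
      rfl)
    (fun p => by
      show c.hs (pj ((1 - (p.1:ℝ))*sv1 (((1:unitInterval)):ℝ)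
          + (p.1:ℝ)*sv2 (((1:unitInterval)):ℝ)),
        c.Pi (p.2, pj ((1 - (p.1:ℝ))*w1 (((1:unitInterval)):ℝ)
          + (p.1:ℝ)*w2 (((1:unitInterval)):ℝ)))) = _
      rw [show ((1 - (p.1:ℝ))*sv1 (((1:unitInterval)):ℝ)
          + (p.1:ℝ)*sv2 (((1:unitInterval)):ℝ)) = 1 by
        rw [Icc.coe_one, show sv1 1 = 1 by norm_num [sv1], show sv2 1 = 1 by norm_num [sv2]]
        ring]
      rw [show ((1 - (p.1:ℝ))*w1 (((1:unitInterval)):ℝ)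
          + (p.1:ℝ)*w2 (((1:unitInterval)):ℝ)) = 1/2 by
        rw [Icc.coe_one, show w1 1 = 1/2 by norm_num [w1], show w2 1 = 1/2 by norm_num [w2]]
        ring]
      rw [pj_one, c.hs.apply_one]
      show c.Pi (p.2, pj (1/2)) = _
      rw [Pi_half]
      rfl)
    c.sgf c.sgf c.b' c.b' c.Th2 c.Th4
    (fun s => rfl) (fun s => rfl) (fun s => rfl) (fun s => rfl)
    (fun s u => by
      rw [c.Th2_eq_Th3 s u]
      show c.hs (pj ((1 - (((0:unitInterval)):ℝ))*sv1 (u:ℝ)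
          + (((0:unitInterval)):ℝ)*sv2 (u:ℝ)),
        c.Pi (s, pj ((1 - (((0:unitInterval)):ℝ))*w1 (u:ℝ)
          + (((0:unitInterval)):ℝ)*w2 (u:ℝ)))) = c.Th3 (s, u)
      rw [show ((1 - (((0:unitInterval)):ℝ))*sv1 (u:ℝ)
          + (((0:unitInterval)):ℝ)*sv2 (u:ℝ)) = sv1 (u:ℝ) by rw [Icc.coe_zero]; ring]
      rw [show ((1 - (((0:unitInterval)):ℝ))*w1 (u:ℝ)
          + (((0:unitInterval)):ℝ)*w2 (u:ℝ)) = w1 (u:ℝ) by rw [Icc.coe_zero]; ring]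
      rfl)
    (fun s u => by
      show c.hs (pj ((1 - (((1:unitInterval)):ℝ))*sv1 (u:ℝ)
          + (((1:unitInterval)):ℝ)*sv2 (u:ℝ)),
        c.Pi (s, pj ((1 - (((1:unitInterval)):ℝ))*w1 (u:ℝ)
          + (((1:unitInterval)):ℝ)*w2 (u:ℝ)))) = c.Th4 (s, u)
      rw [show ((1 - (((1:unitInterval)):ℝ))*sv1 (u:ℝ)
          + (((1:unitInterval)):ℝ)*sv2 (u:ℝ)) = sv2 (u:ℝ) by rw [Icc.coe_one]; ring]
      rw [show ((1 - (((1:unitInterval)):ℝ))*w1 (u:ℝ)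
          + (((1:unitInterval)):ℝ)*w2 (u:ℝ)) = w2 (u:ℝ) by rw [Icc.coe_one]; ring]
      rfl)

end Ctx

namespace Ctx

variable {S G X : Type u} [TopologicalSpace S] [TopologicalSpace G] [TopologicalSpace X]
variable (c : Ctx S G X)

def P4 : C((unitInterval × S) × unitInterval, X) :=
  ⟨fun q => if 2*uc q ≤ 1 then
      c.hs (pj ((1 - tc q)*(2*uc q) + tc q*vt (2*uc q)),
        c.hs (pj (tc q * wt (2*uc q)), c.f q.1.2))
    else c.db (q.1.2, pj (2*uc q - 1)), by
    apply Continuous.if_le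
    · refine c.hs.continuous.comp (Continuous.prodMk ?_ (c.hs.continuous.comp
        (Continuous.prodMk ?_ ((map_continuous c.f).comp
          (continuous_snd.comp continuous_fst)))))
      · exact continuous_pj.comp (((continuous_const.sub tc_cont).mul
          (continuous_const.mul uc_cont)).add
            (tc_cont.mul (vt_cont.comp (continuous_const.mul uc_cont))))
      · exact continuous_pj.comp (tc_cont.mul (wt_cont.comp (continuous_const.mul uc_cont)))
    · exact (map_continuous c.db).comp ((continuous_snd.comp continuous_fst).prodMk
        (continuous_pj.comp ((continuous_const.mul uc_cont).sub continuous_const)))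
    · exact continuous_const.mul uc_cont
    · exact continuous_const
    · intro q hq
      rw [hq]
      rw [show ((1 - tc q)*(1:ℝ) + tc q*vt 1) = 1 by rw [show vt 1 = 1 by norm_num [vt]]; ring,
        show (tc q * wt 1) = 0 by rw [show wt 1 = 0 by norm_num [wt]]; ring,
        pj_one, pj_zero, c.hs.apply_zero, c.hs.apply_one,
        show (1:ℝ) - 1 = 0 by norm_num, pj_zero, db_zero]
      rfl⟩

def mvC4 : ContinuousMap.Homotopy c.q6 c.q7 :=
  bigmove c.g c.f c.cnstA c.cnstB c.P4
    (fun p => by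
      show (if 2*(((0:unitInterval)):ℝ) ≤ 1 then
          c.hs (pj ((1 - (p.1:ℝ))*(2*(((0:unitInterval)):ℝ))
              + (p.1:ℝ)*vt (2*(((0:unitInterval)):ℝ))),
            c.hs (pj ((p.1:ℝ) * wt (2*(((0:unitInterval)):ℝ))), c.f p.2))
        else _) = _
      rw [if_pos (by rw [Icc.coe_zero]; norm_num)]
      rw [show ((1 - (p.1:ℝ))*(2*(((0:unitInterval)):ℝ))
          + (p.1:ℝ)*vt (2*(((0:unitInterval)):ℝ))) = 0 by
        rw [Icc.coe_zero, show vt (2*(0:ℝ)) = 0 by norm_num [vt]]; ring]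
      rw [show ((p.1:ℝ) * wt (2*(((0:unitInterval)):ℝ))) = 0 by
        rw [Icc.coe_zero, show wt (2*(0:ℝ)) = 0 by norm_num [wt]]; ring]
      rw [pj_zero, c.hs.apply_zero, c.hs.apply_zero]
      rfl)
    (fun p => by
      show (if 2*(((1:unitInterval)):ℝ) ≤ 1 then _
        else c.db (p.2, pj (2*(((1:unitInterval)):ℝ) - 1))) = _
      rw [if_neg (by rw [Icc.coe_one]; norm_num),
        show (2*(((1:unitInterval)):ℝ) - 1) = 1 by rw [Icc.coe_one]; norm_num, pj_one, db_one]
      rfl)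
    c.sgf c.sgf c.b' c.b' c.Th4 c.Th5
    (fun s => rfl) (fun s => rfl) (fun s => rfl) (fun s => rfl)
    (fun s u => by
      have h := c.C4_zero_eq s u
      show (if 2*(u:ℝ) ≤ 1 then
          c.hs (pj ((1 - (((0:unitInterval)):ℝ))*(2*(u:ℝ))
              + (((0:unitInterval)):ℝ)*vt (2*(u:ℝ))),
            c.hs (pj ((((0:unitInterval)):ℝ) * wt (2*(u:ℝ))), c.f s))
        else c.db (s, pj (2*(u:ℝ) - 1))) = c.Th4 (s, u)
      rw [show ((1 - (((0:unitInterval)):ℝ))*(2*(u:ℝ))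
          + (((0:unitInterval)):ℝ)*vt (2*(u:ℝ))) = 2*(u:ℝ) by rw [Icc.coe_zero]; ring]
      rw [show ((((0:unitInterval)):ℝ) * wt (2*(u:ℝ))) = 0 by rw [Icc.coe_zero]; ring]
      exact h)
    (fun s u => by
      show (if 2*(u:ℝ) ≤ 1 then
          c.hs (pj ((1 - (((1:unitInterval)):ℝ))*(2*(u:ℝ))
              + (((1:unitInterval)):ℝ)*vt (2*(u:ℝ))),
            c.hs (pj ((((1:unitInterval)):ℝ) * wt (2*(u:ℝ))), c.f s))
        else c.db (s, pj (2*(u:ℝ) - 1))) = c.Th5 (s, u)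
      rw [show ((1 - (((1:unitInterval)):ℝ))*(2*(u:ℝ))
          + (((1:unitInterval)):ℝ)*vt (2*(u:ℝ))) = vt (2*(u:ℝ)) by rw [Icc.coe_one]; ring]
      rw [show ((((1:unitInterval)):ℝ) * wt (2*(u:ℝ))) = wt (2*(u:ℝ)) by
        rw [Icc.coe_one]; ring]
      rfl)

def P5 : C((unitInterval × S) × unitInterval, X) :=
  ⟨fun q => if 2*uc q ≤ 1 then
      c.hs (pj ((1 - tc q)*tent5 (2*uc q)), c.hs (pj (min (3*(2*uc q)) 1), c.f q.1.2))
    else c.db (q.1.2, pj (2*uc q - 1)), by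
    apply Continuous.if_le
    · refine c.hs.continuous.comp (Continuous.prodMk ?_ (c.hs.continuous.comp
        (Continuous.prodMk ?_ ((map_continuous c.f).comp
          (continuous_snd.comp continuous_fst)))))
      · exact continuous_pj.comp ((continuous_const.sub tc_cont).mul
          (tent5_cont.comp (continuous_const.mul uc_cont)))
      · exact continuous_pj.comp ((continuous_const.mul
          (continuous_const.mul uc_cont)).min continuous_const)
    · exact (map_continuous c.db).comp ((continuous_snd.comp continuous_fst).prodMk
        (continuous_pj.comp ((continuous_const.mul uc_cont).sub continuous_const)))
    · exact continuous_const.mul uc_cont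
    · exact continuous_const
    · intro q hq
      rw [hq]
      rw [show ((1 - tc q)*tent5 1) = 0 by rw [show tent5 1 = 0 by norm_num [tent5]]; ring,
        show min (3*(1:ℝ)) 1 = 1 by norm_num, pj_one, pj_zero, c.hs.apply_zero,
        c.hs.apply_one, show (1:ℝ) - 1 = 0 by norm_num, pj_zero, db_zero]
      rfl⟩

def mvC5 : ContinuousMap.Homotopy c.q7 c.q8 :=
  bigmove c.g c.f c.cnstA c.cnstB c.P5
    (fun p => by
      show (if 2*(((0:unitInterval)):ℝ) ≤ 1 then
          c.hs (pj ((1 - (p.1:ℝ))*tent5 (2*(((0:unitInterval)):ℝ))),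
            c.hs (pj (min (3*(2*(((0:unitInterval)):ℝ))) 1), c.f p.2))
        else _) = _
      rw [if_pos (by rw [Icc.coe_zero]; norm_num)]
      rw [show ((1 - (p.1:ℝ))*tent5 (2*(((0:unitInterval)):ℝ))) = 0 by
        rw [Icc.coe_zero, show tent5 (2*(0:ℝ)) = 0 by norm_num [tent5]]; ring]
      rw [show (min (3*(2*(((0:unitInterval)):ℝ))) 1) = 0 by rw [Icc.coe_zero]; norm_num]
      rw [pj_zero, c.hs.apply_zero, c.hs.apply_zero]
      rfl)
    (fun p => by
      show (if 2*(((1:unitInterval)):ℝ) ≤ 1 then _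
        else c.db (p.2, pj (2*(((1:unitInterval)):ℝ) - 1))) = _
      rw [if_neg (by rw [Icc.coe_one]; norm_num),
        show (2*(((1:unitInterval)):ℝ) - 1) = 1 by rw [Icc.coe_one]; norm_num, pj_one, db_one]
      rfl)
    c.sgf c.sgf c.b' c.b' c.Th5 c.Th6
    (fun s => rfl) (fun s => rfl) (fun s => rfl) (fun s => rfl)
    (fun s u => by
      have h := c.C5_zero_eq s u
      show (if 2*(u:ℝ) ≤ 1 then
          c.hs (pj ((1 - (((0:unitInterval)):ℝ))*tent5 (2*(u:ℝ))),
            c.hs (pj (min (3*(2*(u:ℝ))) 1), c.f s))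
        else c.db (s, pj (2*(u:ℝ) - 1))) = c.Th5 (s, u)
      rw [show ((1 - (((0:unitInterval)):ℝ))*tent5 (2*(u:ℝ))) = tent5 (2*(u:ℝ)) by
        rw [Icc.coe_zero]; ring]
      exact h)
    (fun s u => by
      show (if 2*(u:ℝ) ≤ 1 then
          c.hs (pj ((1 - (((1:unitInterval)):ℝ))*tent5 (2*(u:ℝ))),
            c.hs (pj (min (3*(2*(u:ℝ))) 1), c.f s))
        else c.db (s, pj (2*(u:ℝ) - 1))) = c.Th6 (s, u)
      show _ = (if 2*(u:ℝ) ≤ 1 then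
          c.g (c.sec (c.hs (pj (min (3*(2*(u:ℝ))) 1), c.f s)))
        else c.db (s, pj (2*(u:ℝ) - 1)))
      split_ifs with h
      · rw [show ((1 - (((1:unitInterval)):ℝ))*tent5 (2*(u:ℝ))) = 0 by
          rw [Icc.coe_one]; ring, pj_zero, c.hs.apply_zero]
        rfl
      · rfl)

def P6 : C((unitInterval × S) × unitInterval, X) :=
  ⟨fun q => c.Th7 (q.1.2, pj ((1 - tc q)*ps6 (uc q) + tc q*uc q)),
    (map_continuous c.Th7).comp ((continuous_snd.comp continuous_fst).prodMk
      (continuous_pj.comp (((continuous_const.sub tc_cont).mul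
        (ps6_cont.comp uc_cont)).add (tc_cont.mul uc_cont))))⟩

def mvC6 : ContinuousMap.Homotopy c.q8 c.q9 :=
  bigmove c.g c.f c.cnstA c.cnstB c.P6
    (fun p => by
      show c.Th7 (p.2, pj ((1 - (p.1:ℝ))*ps6 (((0:unitInterval)):ℝ)
        + (p.1:ℝ)*(((0:unitInterval)):ℝ))) = _
      rw [show ((1 - (p.1:ℝ))*ps6 (((0:unitInterval)):ℝ)
        + (p.1:ℝ)*(((0:unitInterval)):ℝ)) = 0 by
        rw [Icc.coe_zero, show ps6 0 = 0 by norm_num [ps6]]; ring, pj_zero, Th7_zero]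
      rfl)
    (fun p => by
      show c.Th7 (p.2, pj ((1 - (p.1:ℝ))*ps6 (((1:unitInterval)):ℝ)
        + (p.1:ℝ)*(((1:unitInterval)):ℝ))) = _
      rw [show ((1 - (p.1:ℝ))*ps6 (((1:unitInterval)):ℝ)
        + (p.1:ℝ)*(((1:unitInterval)):ℝ)) = 1 by
        rw [Icc.coe_one, show ps6 1 = 1 by norm_num [ps6]]; ring, pj_one, Th7_one]
      rfl)
    c.sgf c.sgf c.b' c.b' c.Th6 c.Th7
    (fun s => rfl) (fun s => rfl) (fun s => rfl) (fun s => rfl)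
    (fun s u => by
      have h := c.C6_zero_eq s u
      show c.Th7 (s, pj ((1 - (((0:unitInterval)):ℝ))*ps6 (u:ℝ)
        + (((0:unitInterval)):ℝ)*(u:ℝ))) = c.Th6 (s, u)
      rw [show ((1 - (((0:unitInterval)):ℝ))*ps6 (u:ℝ)
        + (((0:unitInterval)):ℝ)*(u:ℝ)) = ps6 (u:ℝ) by rw [Icc.coe_zero]; ring]
      exact h)
    (fun s u => by
      show c.Th7 (s, pj ((1 - (((1:unitInterval)):ℝ))*ps6 (u:ℝ)
        + (((1:unitInterval)):ℝ)*(u:ℝ))) = c.Th7 (s, u)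
      rw [show ((1 - (((1:unitInterval)):ℝ))*ps6 (u:ℝ)
        + (((1:unitInterval)):ℝ)*(u:ℝ)) = (u:ℝ) by rw [Icc.coe_one]; ring, pj_coe])

lemma jC7 : ∀ s, c.db (s, 0) = c.g (c.ct (1, s)) := fun s => by
  rw [db_zero, ct_one]; rfl

lemma jC7' : ∀ s : S, (gcPF c.g c.ct) (s, 1) = c.db (s, 0) := fun s => by
  show c.Gst (s, 1) = _
  rw [Gst_one, db_zero]

/-- C7: slide `sgf ⇝ sec∘f` back, removing the `Gsτ` prefix. -/
def mvC7 : ContinuousMap.Homotopy c.q9 c.q10 :=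
  bigmove c.g c.f c.ct c.cnstB
    (emoveP c.g c.ct c.db c.jC7)
    (fun p => emoveP_e0 _ _ _ _ p)
    (fun p => by rw [emoveP_e1, db_one]; rfl)
    c.sgf c.sf c.b' c.b' c.Th7 c.db
    (fun s => c.ct_zero s) (fun s => c.ct_one s)
    (fun s => rfl) (fun s => rfl)
    (fun s u => emoveP_zero _ _ _ _ c.jC7' s u)
    (fun s u => emoveP_one _ _ _ _ s u)

lemma jD1 : ∀ s, c.pb (s, 0) = c.g (c.cK (1, s)) := fun s => by
  rw [c.hp0, cK_one]

lemma jD1' : ∀ s : S, (gcPF c.g c.cK) (s, 1) = c.pb (s, 0) := fun s => by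
  show c.gKr (s, 1) = _
  rw [gKr_one, c.hp0]

/-- D1: slide `sec∘f ⇝ a'` along `K⁻¹`, removing the `g∘K⁻¹` prefix. -/
def mvD1 : ContinuousMap.Homotopy c.q10 c.q11 :=
  bigmove c.g c.f c.cK c.cnstB
    (emoveP c.g c.cK c.pb c.jD1)
    (fun p => emoveP_e0 _ _ _ _ p)
    (fun p => by rw [emoveP_e1, c.hp1]; rfl)
    c.sf c.a' c.b' c.b' c.db c.pb
    (fun s => c.cK_zero s) (fun s => c.cK_one s)
    (fun s => rfl) (fun s => rfl)
    (fun s u => emoveP_zero _ _ _ _ c.jD1' s u)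
    (fun s u => emoveP_one _ _ _ _ s u)

/-- The main chain: the `θ`-state is homotopic to the `σ̄`-state. -/
theorem core_homotopic : c.qTh.Homotopic c.q11 := by
  have hA1 : c.qTh.Homotopic c.qA := ContinuousMap.Homotopic.symm (Nonempty.intro c.mvA1)
  have hA2 : c.qA.Homotopic c.qB := Nonempty.intro c.mvA2
  have hC1 : c.qB.Homotopic c.q1 := ContinuousMap.Homotopic.symm (Nonempty.intro c.mvC1)
  have hC2 : c.q1.Homotopic c.q2 := ContinuousMap.Homotopic.symm (Nonempty.intro c.mvC2)
  have h23 : c.q2.Homotopic c.q3 := Nonempty.intro c.mvC23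
  have h25 : c.q3.Homotopic c.q4 := Nonempty.intro c.mvC25
  have h3 : c.q4.Homotopic c.q6 := Nonempty.intro c.mvC3
  have h4 : c.q6.Homotopic c.q7 := Nonempty.intro c.mvC4
  have h5 : c.q7.Homotopic c.q8 := Nonempty.intro c.mvC5
  have h6 : c.q8.Homotopic c.q9 := Nonempty.intro c.mvC6
  have h7 : c.q9.Homotopic c.q10 := Nonempty.intro c.mvC7
  have hD : c.q10.Homotopic c.q11 := Nonempty.intro c.mvD1
  exact hA1.trans <| hA2.trans <| hC1.trans <| hC2.trans <| h23.trans <| h25.trans <|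
    h3.trans <| h4.trans <| h5.trans <| h6.trans <| h7.trans hD

end Ctx


end DEH

/-- Let `η, β : W → A`, `f : Σ_A W → X` with `ι_X = f ∘ θ` and
`secat(ι_X) ≤ n` (where `n = 1 + m ≥ 1`), and let `σ : X → G_n(ι_X)` be any homotopy
section of `g_n`. Let `H_n` be the homotopy pullback of `g_n` and `f`, with projections
`f_n = pr1 : H_n → G_n(ι_X)` and `η_n^W = pr2 : H_n → Σ_A W`; let
`θ_n^W = (ω_n, id) : Σ_A W → H_n` be the whisker map (induced by a homotopy
`g_n ∘ ω_n ≃ f`); let `σ̄ : Σ_A W → H_n` be a whisker map with `f_n ∘ σ̄ ≃ σ ∘ f` and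
`η_n^W ∘ σ̄ ≃ id` (arising from the prism lemma); and let `Q` be the homotopy pullback of
`θ_n^W` and `σ̄` with projections `π, π'`. Then `π ≃ π'`, and the following are equivalent:
(i) `σ ∘ f ≃ ω_n`; (ii) `π` admits a homotopy section; (iii) `π` is a homotopy
epimorphism; (iv) `θ_n^W ≃ σ̄`. -/
theorem section_omega_tfae {W A X : Type u} [TopologicalSpace W] [TopologicalSpace A]
    [TopologicalSpace X] {η β : C(W, A)} (R : RelSusp η β) (f : C(R.S, X)) (m : ℕ)
    (hsecat : secat (f.comp R.θ) ≤ ((1 + m : ℕ) : ℕ∞))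
    (sec : C(X, GaneaG (f.comp R.θ) (1 + m)))
    (hsec : ((ganeaMap (f.comp R.θ) (1 + m)).comp sec).Homotopic (ContinuousMap.id X))
    (Hω : ContinuousMap.Homotopy
      ((ganeaMap (f.comp R.θ) (1 + m)).comp (omega R (f.comp R.θ) f (fun _ => rfl) m)) f)
    (θW : C(R.S, HPb (ganeaMap (f.comp R.θ) (1 + m)) f))
    (hθW : θW = HPb.whisker (ganeaMap (f.comp R.θ) (1 + m)) f
      (omega R (f.comp R.θ) f (fun _ => rfl) m) (ContinuousMap.id R.S) Hω)
    (sb : C(R.S, HPb (ganeaMap (f.comp R.θ) (1 + m)) f))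
    (hsb1 : ((HPb.pr1 (ganeaMap (f.comp R.θ) (1 + m)) f).comp sb).Homotopic (sec.comp f))
    (hsb2 : ((HPb.pr2 (ganeaMap (f.comp R.θ) (1 + m)) f).comp sb).Homotopic
      (ContinuousMap.id R.S)) :
    (HPb.pr1 θW sb).Homotopic (HPb.pr2 θW sb) ∧
    List.TFAE [
      (sec.comp f).Homotopic (omega R (f.comp R.θ) f (fun _ => rfl) m),
      ∃ s : C(R.S, HPb θW sb), ((HPb.pr1 θW sb).comp s).Homotopic (ContinuousMap.id R.S),
      IsHEpi (HPb.pr1 θW sb),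
      θW.Homotopic sb] := by
  subst hθW
  have hpp : (HPb.pr1 (HPb.whisker (ganeaMap (f.comp R.θ) (1 + m)) f (omega R (f.comp R.θ) f (fun _ => rfl) m) (ContinuousMap.id R.S) Hω) sb).Homotopic (HPb.pr2 (HPb.whisker (ganeaMap (f.comp R.θ) (1 + m)) f (omega R (f.comp R.θ) f (fun _ => rfl) m) (ContinuousMap.id R.S) Hω) sb) := by
    have e1 : HPb.pr1 (HPb.whisker (ganeaMap (f.comp R.θ) (1 + m)) f (omega R (f.comp R.θ) f (fun _ => rfl) m) (ContinuousMap.id R.S) Hω) sb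
        = (HPb.pr2 (ganeaMap (f.comp R.θ) (1 + m)) f).comp ((HPb.whisker (ganeaMap (f.comp R.θ) (1 + m)) f (omega R (f.comp R.θ) f (fun _ => rfl) m) (ContinuousMap.id R.S) Hω).comp (HPb.pr1 (HPb.whisker (ganeaMap (f.comp R.θ) (1 + m)) f (omega R (f.comp R.θ) f (fun _ => rfl) m) (ContinuousMap.id R.S) Hω) sb)) := by
      ext q; rfl
    rw [e1]
    refine (ContinuousMap.Homotopic.comp (ContinuousMap.Homotopic.refl (HPb.pr2 (ganeaMap (f.comp R.θ) (1 + m)) f))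
      ⟨HPb.evalHomotopy (HPb.whisker (ganeaMap (f.comp R.θ) (1 + m)) f (omega R (f.comp R.θ) f (fun _ => rfl) m) (ContinuousMap.id R.S) Hω) sb⟩).trans ?_
    have h3 := ContinuousMap.Homotopic.comp hsb2
      (ContinuousMap.Homotopic.refl (HPb.pr2 (HPb.whisker (ganeaMap (f.comp R.θ) (1 + m)) f (omega R (f.comp R.θ) f (fun _ => rfl) m) (ContinuousMap.id R.S) Hω) sb))
    rwa [ContinuousMap.comp_assoc, ContinuousMap.id_comp] at h3
  refine ⟨hpp, ?_⟩
  tfae_have 1 → 4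
  · intro h1
    let c : DEH.Ctx R.S (GaneaG (f.comp R.θ) (1 + m)) X :=
      { g := (ganeaMap (f.comp R.θ) (1 + m))
        f := f
        sec := sec
        om := (omega R (f.comp R.θ) f (fun _ => rfl) m)
        a' := (HPb.pr1 (ganeaMap (f.comp R.θ) (1 + m)) f).comp sb
        b' := (HPb.pr2 (ganeaMap (f.comp R.θ) (1 + m)) f).comp sb
        hs := hsec.some
        M := h1.some
        Hom := Hω
        K := hsb1.some
        B := hsb2.some
        pb := ContinuousMap.uncurry
          ⟨fun s => (sb s).1.2.1, continuous_fst.comp (continuous_snd.comp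
            (continuous_subtype_val.comp (map_continuous sb)))⟩
        hp0 := fun s => (sb s).2.1
        hp1 := fun s => (sb s).2.2 }
    have hcore := c.core_homotopic
    have eθ : c.qTh = (HPb.whisker (ganeaMap (f.comp R.θ) (1 + m)) f (omega R (f.comp R.θ) f (fun _ => rfl) m) (ContinuousMap.id R.S) Hω) := by
      refine ContinuousMap.ext fun s => Subtype.ext ?_
      rfl
    have esb : c.q11 = sb := by
      refine ContinuousMap.ext fun s => Subtype.ext ?_
      rfl
    rwa [eθ, esb] at hcore
  tfae_have 4 → 1
  · intro h4
    have e : (HPb.pr1 (ganeaMap (f.comp R.θ) (1 + m)) f).comp (HPb.whisker (ganeaMap (f.comp R.θ) (1 + m)) f (omega R (f.comp R.θ) f (fun _ => rfl) m) (ContinuousMap.id R.S) Hω) = (omega R (f.comp R.θ) f (fun _ => rfl) m) := by ext z; rfl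
    rw [← e]
    exact hsb1.symm.trans
      (ContinuousMap.Homotopic.comp
        (ContinuousMap.Homotopic.refl (HPb.pr1 (ganeaMap (f.comp R.θ) (1 + m)) f)) h4.symm)
  tfae_have 4 → 2
  · intro h4
    have Ht : ContinuousMap.Homotopy ((HPb.whisker (ganeaMap (f.comp R.θ) (1 + m)) f (omega R (f.comp R.θ) f (fun _ => rfl) m) (ContinuousMap.id R.S) Hω).comp (ContinuousMap.id R.S))
        (sb.comp (ContinuousMap.id R.S)) := by
      rw [ContinuousMap.comp_id, ContinuousMap.comp_id]
      exact h4.some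
    refine ⟨HPb.whisker (HPb.whisker (ganeaMap (f.comp R.θ) (1 + m)) f (omega R (f.comp R.θ) f (fun _ => rfl) m) (ContinuousMap.id R.S) Hω) sb (ContinuousMap.id R.S) (ContinuousMap.id R.S) Ht, ?_⟩
    have e : (HPb.pr1 (HPb.whisker (ganeaMap (f.comp R.θ) (1 + m)) f (omega R (f.comp R.θ) f (fun _ => rfl) m) (ContinuousMap.id R.S) Hω) sb).comp
        (HPb.whisker (HPb.whisker (ganeaMap (f.comp R.θ) (1 + m)) f (omega R (f.comp R.θ) f (fun _ => rfl) m) (ContinuousMap.id R.S) Hω) sb (ContinuousMap.id R.S) (ContinuousMap.id R.S) Ht)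
        = ContinuousMap.id R.S := by ext z; rfl
    rw [e]
  tfae_have 2 → 3
  · rintro ⟨s, hs2⟩ Z u v huv
    have h1 : u.Homotopic (u.comp ((HPb.pr1 (HPb.whisker (ganeaMap (f.comp R.θ) (1 + m)) f (omega R (f.comp R.θ) f (fun _ => rfl) m) (ContinuousMap.id R.S) Hω) sb).comp s)) := by
      have h := ContinuousMap.Homotopic.comp (ContinuousMap.Homotopic.refl u) hs2.symm
      rwa [ContinuousMap.comp_id] at h
    have h2 : (u.comp ((HPb.pr1 (HPb.whisker (ganeaMap (f.comp R.θ) (1 + m)) f (omega R (f.comp R.θ) f (fun _ => rfl) m) (ContinuousMap.id R.S) Hω) sb).comp s)).Homotopic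
        (v.comp ((HPb.pr1 (HPb.whisker (ganeaMap (f.comp R.θ) (1 + m)) f (omega R (f.comp R.θ) f (fun _ => rfl) m) (ContinuousMap.id R.S) Hω) sb).comp s)) := by
      have h := ContinuousMap.Homotopic.comp huv (ContinuousMap.Homotopic.refl s)
      rwa [ContinuousMap.comp_assoc, ContinuousMap.comp_assoc] at h
    have h3 : (v.comp ((HPb.pr1 (HPb.whisker (ganeaMap (f.comp R.θ) (1 + m)) f (omega R (f.comp R.θ) f (fun _ => rfl) m) (ContinuousMap.id R.S) Hω) sb).comp s)).Homotopic v := by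
      have h := ContinuousMap.Homotopic.comp (ContinuousMap.Homotopic.refl v) hs2
      rwa [ContinuousMap.comp_id] at h
    exact h1.trans (h2.trans h3)
  tfae_have 3 → 4
  · intro h3
    refine h3 (TopCat.of (HPb (ganeaMap (f.comp R.θ) (1 + m)) f)) (HPb.whisker (ganeaMap (f.comp R.θ) (1 + m)) f (omega R (f.comp R.θ) f (fun _ => rfl) m) (ContinuousMap.id R.S) Hω) sb ?_
    refine ContinuousMap.Homotopic.trans
      (Nonempty.intro (HPb.evalHomotopy (HPb.whisker (ganeaMap (f.comp R.θ) (1 + m)) f (omega R (f.comp R.θ) f (fun _ => rfl) m) (ContinuousMap.id R.S) Hω) sb)) ?_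
    exact ContinuousMap.Homotopic.comp (ContinuousMap.Homotopic.refl sb) hpp.symm
  tfae_finish
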